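/- arXiv:2602.07476 — 5 statements merged into one kernel-verified Lean document; each statement's English description precedes it below -/
import Mathlib

section
/- Let A ∈ ℝ^{n×n}, B ∈ ℝ^{n×m}, b ∈ ℝⁿ, and fix a Kalman controllable decomposition of (A,B) given by orthonormal matrices P₁ ∈ ℝ^{n×k}, P₂ ∈ ℝ^{n×(n−k)} with resulting blocks A₁₁, A₁₂, A₂₂, B₁. Then b lies in the image of the block matrix (A, B) ∈ ℝ^{n×(n+m)} if and only if P₂ᵀ b lies in the image of A₂₂. -/
open MeasureTheory Matrix Filter

namespace Turnpike

/-- Euclidean norm of a real vector. -/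
noncomputable def vnorm {n : ℕ} (x : Fin n → ℝ) : ℝ := Real.sqrt (∑ i, (x i) ^ 2)

/-- Frobenius norm of a real matrix. -/
noncomputable def mnorm {n m : ℕ} (M : Matrix (Fin n) (Fin m) ℝ) : ℝ :=
  Real.sqrt (∑ i, ∑ j, (M i j) ^ 2)

/-- Euclidean norm of a complex vector. -/
noncomputable def cnorm {d : ℕ} (w : Fin d → ℂ) : ℝ := Real.sqrt (∑ i, ‖w i‖ ^ 2)

/-- The state trajectory `X(t) = e^{tA} x + ∫₀ᵗ e^{(t-s)A} (B u(s) + b) ds`. -/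
noncomputable def traj {n m : ℕ} (A : Matrix (Fin n) (Fin n) ℝ) (B : Matrix (Fin n) (Fin m) ℝ)
    (b x : Fin n → ℝ) (u : ℝ → Fin m → ℝ) (t : ℝ) : Fin n → ℝ :=
  (NormedSpace.exp (t • A)).mulVec x +
    ∫ s in (0:ℝ)..t, (NormedSpace.exp ((t - s) • A)).mulVec (B.mulVec (u s) + b)

/-- `u ∈ L²(0,T;ℝᵐ)`. -/
def IsL2 {m : ℕ} (T : ℝ) (u : ℝ → Fin m → ℝ) : Prop :=
  MemLp u 2 (volume.restrict (Set.Ioc 0 T))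

/-- The cost functional `J_T(x;u) = ∫₀ᵀ f(X(t),u(t)) dt`. -/
noncomputable def cost {n m : ℕ} (A : Matrix (Fin n) (Fin n) ℝ) (B : Matrix (Fin n) (Fin m) ℝ)
    (b : Fin n → ℝ) (f : (Fin n → ℝ) → (Fin m → ℝ) → ℝ) (T : ℝ) (x : Fin n → ℝ)
    (u : ℝ → Fin m → ℝ) : ℝ :=
  ∫ t in (0:ℝ)..T, f (traj A B b x u t) (u t)

/-- `u` is an optimal control for Problem (LC)_T with initial state `x`. -/
def OptimalControl {n m : ℕ} (A : Matrix (Fin n) (Fin n) ℝ) (B : Matrix (Fin n) (Fin m) ℝ)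
    (b : Fin n → ℝ) (f : (Fin n → ℝ) → (Fin m → ℝ) → ℝ) (T : ℝ) (x : Fin n → ℝ)
    (u : ℝ → Fin m → ℝ) : Prop :=
  IsL2 T u ∧ ∀ v : ℝ → Fin m → ℝ, IsL2 T v → cost A B b f T x u ≤ cost A B b f T x v

/-- Kalman rank condition for controllability of `(A,B)`. -/
def Controllable {k m : ℕ} (A : Matrix (Fin k) (Fin k) ℝ) (B : Matrix (Fin k) (Fin m) ℝ) : Prop :=
  ∀ v : Fin k → ℝ, (∀ i : ℕ, i < k → Matrix.vecMul v (A ^ i * B) = 0) → v = 0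

/-- Observability of the pair `(A,C)`. -/
def Observable {n : ℕ} (A C : Matrix (Fin n) (Fin n) ℝ) : Prop :=
  ∀ v : Fin n → ℝ, (∀ i : ℕ, i < n → (C * A ^ i).mulVec v = 0) → v = 0

/-- A Kalman controllable decomposition of `(A,B)` given by `P₁, P₂` with `P = (P₁,P₂)`
orthogonal, columns of `P₁` spanning the controllable subspace. -/
structure KalmanDec (n k l m : ℕ) (A : Matrix (Fin n) (Fin n) ℝ) (B : Matrix (Fin n) (Fin m) ℝ)
    (P₁ : Matrix (Fin n) (Fin k) ℝ) (P₂ : Matrix (Fin n) (Fin l) ℝ) : Prop where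
  orth₁ : P₁ᵀ * P₁ = 1
  orth₂ : P₂ᵀ * P₂ = 1
  orth₁₂ : P₁ᵀ * P₂ = 0
  complete : P₁ * P₁ᵀ + P₂ * P₂ᵀ = 1
  lowerZero : P₂ᵀ * A * P₁ = 0
  inputZero : P₂ᵀ * B = 0
  ctrb : Controllable (P₁ᵀ * A * P₁) (P₁ᵀ * B)

/-- `𝒢₁`: real vectors lying in the sum of the generalized eigenspaces of `A₂₂` associated
with eigenvalues of negative real part. -/
noncomputable def G1 {l : ℕ} (A22 : Matrix (Fin l) (Fin l) ℝ) : Set (Fin l → ℝ) :=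
  {y | (fun i => (y i : ℂ)) ∈ Submodule.span ℂ
      {w : Fin l → ℂ | ∃ μ : ℂ, μ.re < 0 ∧
        ((A22.map (Complex.ofReal) - μ • 1) ^ l).mulVec w = 0}}

/-- `𝒢₂ = ker A₂₂`. -/
def G2 {l : ℕ} (A22 : Matrix (Fin l) (Fin l) ℝ) : Set (Fin l → ℝ) := {y | A22.mulVec y = 0}

/-- `w ∈ 𝒢₁ ⊕ 𝒢₂`. -/
def Feas {l : ℕ} (A22 : Matrix (Fin l) (Fin l) ℝ) (w : Fin l → ℝ) : Prop :=
  ∃ y₁ ∈ G1 A22, ∃ y₂ ∈ G2 A22, w = y₁ + y₂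

/-- `IsQ2 A22 w y₂` says `y₂ = Q₂ w`: `y₂ ∈ 𝒢₂` and `w - y₂ ∈ 𝒢₁`
(in particular `w ∈ 𝒢₁ ⊕ 𝒢₂`). -/
def IsQ2 {l : ℕ} (A22 : Matrix (Fin l) (Fin l) ℝ) (w y₂ : Fin l → ℝ) : Prop :=
  y₂ ∈ G2 A22 ∧ w - y₂ ∈ G1 A22

/-- Membership `(z,u) ∈ 𝒱ₓ`. -/
def InV {n m l : ℕ} (A : Matrix (Fin n) (Fin n) ℝ) (B : Matrix (Fin n) (Fin m) ℝ)
    (b : Fin n → ℝ) (P₂ : Matrix (Fin n) (Fin l) ℝ) (c : Fin l → ℝ) (x : Fin n → ℝ)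
    (z : Fin n → ℝ) (u : Fin m → ℝ) : Prop :=
  A.mulVec z + B.mulVec u + b = 0 ∧
  IsQ2 (P₂ᵀ * A * P₂) (P₂ᵀ.mulVec x + c) (P₂ᵀ.mulVec z + c)

/-- Partial gradient `f_x`. -/
noncomputable def gradX {n m : ℕ} (f : (Fin n → ℝ) → (Fin m → ℝ) → ℝ)
    (x : Fin n → ℝ) (u : Fin m → ℝ) : Fin n → ℝ :=
  fun i => deriv (fun s : ℝ => f (x + s • (Pi.single i 1 : Fin n → ℝ)) u) 0

/-- Partial gradient `f_u`. -/
noncomputable def gradU {n m : ℕ} (f : (Fin n → ℝ) → (Fin m → ℝ) → ℝ)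
    (x : Fin n → ℝ) (u : Fin m → ℝ) : Fin m → ℝ :=
  fun j => deriv (fun s : ℝ => f x (u + s • (Pi.single j 1 : Fin m → ℝ))) 0

/-- Full Hessian matrix `∇²f(x,u)` on `ℝⁿ × ℝᵐ`, indexed by `Fin n ⊕ Fin m`. -/
noncomputable def hessMat {n m : ℕ} (f : (Fin n → ℝ) → (Fin m → ℝ) → ℝ)
    (x : Fin n → ℝ) (u : Fin m → ℝ) : Matrix (Fin n ⊕ Fin m) (Fin n ⊕ Fin m) ℝ :=
  fun i j => deriv (fun s : ℝ => deriv (fun r : ℝ =>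
      f (fun a => (Sum.elim x u + s • (Pi.single i 1 : Fin n ⊕ Fin m → ℝ) + r • (Pi.single j 1 : Fin n ⊕ Fin m → ℝ)) (Sum.inl a))
        (fun a => (Sum.elim x u + s • (Pi.single i 1 : Fin n ⊕ Fin m → ℝ) + r • (Pi.single j 1 : Fin n ⊕ Fin m → ℝ)) (Sum.inr a))) 0) 0

/-- Assumption (A2): `f` is `C²` and `∇²f ⪰ δ I` everywhere. -/
def A2Hyp {n m : ℕ} (f : (Fin n → ℝ) → (Fin m → ℝ) → ℝ) (δ : ℝ) : Prop :=
  ContDiff ℝ 2 (fun p : (Fin n → ℝ) × (Fin m → ℝ) => f p.1 p.2) ∧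
  ∀ (x : Fin n → ℝ) (u : Fin m → ℝ),
    (hessMat f x u - δ • (1 : Matrix (Fin n ⊕ Fin m) (Fin n ⊕ Fin m) ℝ)).PosSemidef

/-- Second partial derivative matrix `f_{xu}(x,u) ∈ ℝ^{n×m}`. -/
noncomputable def fxuMat {n m : ℕ} (f : (Fin n → ℝ) → (Fin m → ℝ) → ℝ)
    (x : Fin n → ℝ) (u : Fin m → ℝ) : Matrix (Fin n) (Fin m) ℝ :=
  fun i j => deriv (fun s : ℝ => gradU f (x + s • (Pi.single i 1 : Fin n → ℝ)) u j) 0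

/-- Second partial derivative matrix `f_{uu}(x,u) ∈ ℝ^{m×m}`. -/
noncomputable def fuuMat {n m : ℕ} (f : (Fin n → ℝ) → (Fin m → ℝ) → ℝ)
    (x : Fin n → ℝ) (u : Fin m → ℝ) : Matrix (Fin m) (Fin m) ℝ :=
  fun i j => deriv (fun s : ℝ => gradU f x (u + s • (Pi.single i 1 : Fin m → ℝ)) j) 0

/-- Assumption (A3). -/
def A3Hyp {n m : ℕ} (f : (Fin n → ℝ) → (Fin m → ℝ) → ℝ) : Prop :=
  ∀ r > (0:ℝ), ∃ γ > (0:ℝ), ∀ (x : Fin n → ℝ) (u : Fin m → ℝ), vnorm x ≤ r →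
    mnorm (fxuMat f x u * (fuuMat f x u)⁻¹) ≤ γ

/-- Value function of Problem (LC)_T. -/
noncomputable def VT {n m : ℕ} (A : Matrix (Fin n) (Fin n) ℝ) (B : Matrix (Fin n) (Fin m) ℝ)
    (b : Fin n → ℝ) (f : (Fin n → ℝ) → (Fin m → ℝ) → ℝ) (T : ℝ) (x : Fin n → ℝ) : ℝ :=
  sInf {r | ∃ u : ℝ → Fin m → ℝ, IsL2 T u ∧ r = cost A B b f T x u}

/-- Optimal value of the static Problem (O). -/
noncomputable def Vstar {n m l : ℕ} (A : Matrix (Fin n) (Fin n) ℝ)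
    (B : Matrix (Fin n) (Fin m) ℝ) (b : Fin n → ℝ) (P₂ : Matrix (Fin n) (Fin l) ℝ)
    (c : Fin l → ℝ) (f : (Fin n → ℝ) → (Fin m → ℝ) → ℝ) (x : Fin n → ℝ) : ℝ :=
  sInf {r | ∃ z u, InV A B b P₂ c x z u ∧ r = f z u}

/-- The matrix `Π(s) = ∫₀¹ (1-θ) ∇²f((1-θ)x* + θX(s), (1-θ)u* + θu(s)) dθ`, entrywise. -/
noncomputable def PiMat {n m : ℕ} (f : (Fin n → ℝ) → (Fin m → ℝ) → ℝ)
    (xs : Fin n → ℝ) (us : Fin m → ℝ) (X : ℝ → Fin n → ℝ) (u : ℝ → Fin m → ℝ)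
    (s : ℝ) : Matrix (Fin n ⊕ Fin m) (Fin n ⊕ Fin m) ℝ :=
  fun i j => ∫ θ in (0:ℝ)..1,
    (1 - θ) * hessMat f ((1 - θ) • xs + θ • X s) ((1 - θ) • us + θ • u s) i j

/-- Auxiliary: a controllable pair gives surjectivity of `(z,q) ↦ A z + B q`. -/
lemma controllable_surj {k m : ℕ} (A : Matrix (Fin k) (Fin k) ℝ) (B : Matrix (Fin k) (Fin m) ℝ)
    (h : Controllable A B) (c : Fin k → ℝ) :
    ∃ z q, A.mulVec z + B.mulVec q = c := by
  set L : ((Fin k → ℝ) × (Fin m → ℝ)) →ₗ[ℝ] (Fin k → ℝ) :=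
    LinearMap.coprod A.mulVecLin B.mulVecLin with hL
  suffices hs : LinearMap.range L = ⊤ by
    have : c ∈ LinearMap.range L := hs ▸ Submodule.mem_top
    obtain ⟨⟨z, q⟩, hzq⟩ := this
    exact ⟨z, q, hzq⟩
  by_contra hne
  obtain ⟨φ, hφne, hφ⟩ :=
    (LinearMap.range L).exists_dual_map_eq_bot_of_lt_top (lt_top_iff_ne_top.2 hne) inferInstance
  have hzero : ∀ x ∈ LinearMap.range L, φ x = 0 := by
    intro x hx
    have : φ x ∈ Submodule.map φ (LinearMap.range L) := Submodule.mem_map_of_mem hx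
    rw [hφ] at this
    simpa using this
  set v : Fin k → ℝ := fun j => φ (Pi.single j 1) with hv
  have hφx : ∀ x : Fin k → ℝ, φ x = ∑ j, x j * v j := by
    intro x
    conv_lhs => rw [pi_eq_sum_univ x, map_sum]
    refine Finset.sum_congr rfl fun i _ => ?_
    rw [_root_.map_smul, smul_eq_mul]
    have he : (fun j => if i = j then (1:ℝ) else 0) = Pi.single i 1 := by
      funext j; simp [Pi.single_apply, eq_comm]
    rw [he]
  have key : ∀ (s : ℕ) (M : Matrix (Fin k) (Fin s) ℝ),
      (∀ y, φ (M.mulVec y) = 0) → Matrix.vecMul v M = 0 := by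
    intro s M hM
    funext j
    have := hM (Pi.single j 1)
    rw [hφx] at this
    simpa [Matrix.mulVec_single, Matrix.vecMul, dotProduct, mul_comm] using this
  have hA : Matrix.vecMul v A = 0 :=
    key k A fun y => hzero _ ⟨(y, 0), by simp [hL]⟩
  have hB : Matrix.vecMul v B = 0 :=
    key m B fun y => hzero _ ⟨(0, y), by simp [hL]⟩
  have hpow : ∀ i : ℕ, 1 ≤ i → Matrix.vecMul v (A ^ i) = 0 := by
    intro i hi
    induction i with
    | zero => omega
    | succ n ih =>
      rcases Nat.eq_or_lt_of_le hi with h1 | h1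
      · simpa [← h1] using hA
      · rw [pow_succ', ← Matrix.vecMul_vecMul, hA]
        simp
  have hv0 : v = 0 := by
    apply h
    intro i hi
    rcases Nat.eq_zero_or_pos i with rfl | hpos
    · simpa using hB
    · rw [← Matrix.vecMul_vecMul, hpow i hpos]
      simp
  refine hφne (LinearMap.ext fun x => ?_)
  rw [hφx, hv0]
  simp

/-- `b ∈ im(A,B)` iff `P₂ᵀ b ∈ im A₂₂` (Proposition 3.1, last claim). -/
theorem im_AB_iff_im_A22 {n k l m : ℕ} (A : Matrix (Fin n) (Fin n) ℝ)
    (B : Matrix (Fin n) (Fin m) ℝ) (P₁ : Matrix (Fin n) (Fin k) ℝ)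
    (P₂ : Matrix (Fin n) (Fin l) ℝ) (hK : KalmanDec n k l m A B P₁ P₂)
    (b : Fin n → ℝ) :
    (∃ (p : Fin n → ℝ) (q : Fin m → ℝ), A.mulVec p + B.mulVec q = b) ↔
      ∃ w : Fin l → ℝ, (P₂ᵀ * A * P₂).mulVec w = P₂ᵀ.mulVec b := by
  have hsplit : ∀ y : Fin n → ℝ,
      P₁.mulVec (P₁ᵀ.mulVec y) + P₂.mulVec (P₂ᵀ.mulVec y) = y := by
    intro y
    rw [Matrix.mulVec_mulVec, Matrix.mulVec_mulVec, ← Matrix.add_mulVec, hK.complete,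
      Matrix.one_mulVec]
  constructor
  · rintro ⟨p, q, hpq⟩
    refine ⟨P₂ᵀ.mulVec p, ?_⟩
    have hPA : P₂ᵀ * A * P₂ * P₂ᵀ = P₂ᵀ * A := by
      calc P₂ᵀ * A * P₂ * P₂ᵀ
          = P₂ᵀ * A * P₁ * P₁ᵀ + P₂ᵀ * A * P₂ * P₂ᵀ := by
            rw [hK.lowerZero, Matrix.zero_mul, zero_add]
        _ = P₂ᵀ * A * (P₁ * P₁ᵀ + P₂ * P₂ᵀ) := by
            rw [Matrix.mul_add]
            simp only [Matrix.mul_assoc]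
        _ = P₂ᵀ * A := by rw [hK.complete, Matrix.mul_one]
    rw [Matrix.mulVec_mulVec, hPA, ← hpq, Matrix.mulVec_add, Matrix.mulVec_mulVec,
      Matrix.mulVec_mulVec, hK.inputZero, Matrix.zero_mulVec, add_zero]
  · rintro ⟨w, hw⟩
    obtain ⟨z, q, hzq⟩ := controllable_surj _ _ hK.ctrb
      (P₁ᵀ.mulVec b - (P₁ᵀ * A * P₂).mulVec w)
    refine ⟨P₁.mulVec z + P₂.mulVec w, q, ?_⟩
    set r := A.mulVec (P₁.mulVec z + P₂.mulVec w) + B.mulVec q with hr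
    have hmv : ∀ (s t : ℕ) (M : Matrix (Fin s) (Fin n) ℝ) (N : Matrix (Fin n) (Fin t) ℝ)
        (y : Fin t → ℝ), M.mulVec (A.mulVec (N.mulVec y)) = (M * A * N).mulVec y := by
      intro s t M N y
      rw [Matrix.mulVec_mulVec, Matrix.mulVec_mulVec, Matrix.mul_assoc]
    have hexp : ∀ (s : ℕ) (M : Matrix (Fin s) (Fin n) ℝ), M.mulVec r
        = (M * A * P₁).mulVec z + (M * A * P₂).mulVec w + (M * B).mulVec q := by
      intro s M
      rw [hr, Matrix.mulVec_add A, Matrix.mulVec_add M, Matrix.mulVec_add M, hmv, hmv,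
        Matrix.mulVec_mulVec]
    have h1 : P₁ᵀ.mulVec r = P₁ᵀ.mulVec b := by
      rw [hexp, add_right_comm, hzq]
      abel
    have h2 : P₂ᵀ.mulVec r = P₂ᵀ.mulVec b := by
      rw [hexp, hK.lowerZero, hK.inputZero, Matrix.zero_mulVec, Matrix.zero_mulVec,
        zero_add, add_zero, hw]
    calc r = P₁.mulVec (P₁ᵀ.mulVec r) + P₂.mulVec (P₂ᵀ.mulVec r) := (hsplit r).symm
    _ = P₁.mulVec (P₁ᵀ.mulVec b) + P₂.mulVec (P₂ᵀ.mulVec b) := by rw [h1, h2]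
    _ = b := hsplit b


end Turnpike
end

section
/- Let M ∈ ℂ^{d×d}, let λ be an eigenvalue of M, and let w be a nonzero vector in the generalized eigenspace G(λ,M) = ker (M − λ I)^d. If there exists a constant K > 0 such that ‖e^{tM} w‖ ≤ K(1 + √t) for all t ≥ 0, then either Re(λ) < 0, or Re(λ) = 0 and M w = λ w. -/
open MeasureTheory Matrix Filter

namespace Turnpike

open NormedSpace Matrix in
private lemma exp_mulVec_expand {d : ℕ} (M : Matrix (Fin d) (Fin d) ℂ) (lam : ℂ)
    (w : Fin d → ℂ) (hgen : ((M - lam • 1) ^ d).mulVec w = 0) (t : ℂ) :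
    (NormedSpace.exp (t • M)).mulVec w
      = Complex.exp (t * lam) •
        ∑ j ∈ Finset.range d,
          ((t ^ j * (j.factorial : ℂ)⁻¹) • ((M - lam • 1) ^ j).mulVec w) := by
  have hsplit : t • M = (t * lam) • (1 : Matrix (Fin d) (Fin d) ℂ) + t • (M - lam • 1) := by
    rw [smul_sub, mul_smul]
    abel
  set N : Matrix (Fin d) (Fin d) ℂ := M - lam • 1 with hN
  have hcomm : Commute ((t * lam) • (1 : Matrix (Fin d) (Fin d) ℂ)) (t • N) :=
    ((Commute.one_left (t • N)).smul_left _)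
  have h1 : NormedSpace.exp ((t * lam) • (1 : Matrix (Fin d) (Fin d) ℂ)) = Complex.exp (t * lam) • 1 := by
    letI : SeminormedRing (Matrix (Fin d) (Fin d) ℂ) := Matrix.linftyOpSemiNormedRing
    letI : NormedRing (Matrix (Fin d) (Fin d) ℂ) := Matrix.linftyOpNormedRing
    letI : NormedAlgebra ℂ (Matrix (Fin d) (Fin d) ℂ) := Matrix.linftyOpNormedAlgebra
    have := NormedSpace.algebraMap_exp_comm (𝔸 := Matrix (Fin d) (Fin d) ℂ) (t * lam)
    rw [Algebra.algebraMap_eq_smul_one, Algebra.algebraMap_eq_smul_one, ← Complex.exp_eq_exp_ℂ] at this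
    exact this.symm
  have key : (NormedSpace.exp (t • N)).mulVec w
      = ∑' n : ℕ, (((n.factorial : ℂ)⁻¹) • (t • N) ^ n).mulVec w := by
    letI : SeminormedRing (Matrix (Fin d) (Fin d) ℂ) := Matrix.linftyOpSemiNormedRing
    letI : NormedRing (Matrix (Fin d) (Fin d) ℂ) := Matrix.linftyOpNormedRing
    letI : NormedAlgebra ℂ (Matrix (Fin d) (Fin d) ℂ) := Matrix.linftyOpNormedAlgebra
    let L : Matrix (Fin d) (Fin d) ℂ →ₗ[ℂ] (Fin d → ℂ) :=
      { toFun := fun A => A.mulVec w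
        map_add' := fun A B => Matrix.add_mulVec A B w
        map_smul' := fun c A => Matrix.smul_mulVec c A w }
    let Lc : Matrix (Fin d) (Fin d) ℂ →L[ℂ] (Fin d → ℂ) := ⟨L, L.continuous_of_finiteDimensional⟩
    have hsum := NormedSpace.expSeries_summable' (𝕂 := ℂ) (t • N)
    have h3 : Lc (NormedSpace.exp (t • N)) = ∑' n : ℕ, Lc (((n.factorial : ℂ)⁻¹) • (t • N) ^ n) := by
      rw [NormedSpace.exp_eq_tsum ℂ]
      exact Lc.map_tsum hsum
    exact h3
  have key2 : (NormedSpace.exp (t • N)).mulVec w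
      = ∑ j ∈ Finset.range d, ((t ^ j * (j.factorial : ℂ)⁻¹) • (N ^ j).mulVec w) := by
    rw [key]
    have hcg : ∀ n : ℕ, (((n.factorial : ℂ)⁻¹) • (t • N) ^ n).mulVec w
        = (t ^ n * (n.factorial : ℂ)⁻¹) • (N ^ n).mulVec w := fun n => by
      rw [smul_pow, smul_smul, Matrix.smul_mulVec, mul_comm]
    rw [tsum_congr hcg]
    refine tsum_eq_sum fun n hn => ?_
    have hd : d ≤ n := le_of_not_gt (by simpa using hn)
    have hpow : N ^ n = N ^ (n - d) * N ^ d := by rw [← pow_add]; congr 1; omega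
    rw [hpow, ← Matrix.mulVec_mulVec, hgen, Matrix.mulVec_zero, smul_zero]
  rw [hsplit, Matrix.exp_add_of_commute _ _ hcomm, h1, smul_mul_assoc, one_mul,
    Matrix.smul_mulVec, key2]

private lemma abs_coord_le_cnorm {d : ℕ} (v : Fin d → ℂ) (i : Fin d) :
    ‖v i‖ ≤ cnorm v := by
  have h1 : ‖v i‖ ^ 2 ≤ ∑ j, ‖v j‖ ^ 2 :=
    Finset.single_le_sum (f := fun j => ‖v j‖ ^ 2) (fun j _ => sq_nonneg _) (Finset.mem_univ i)
  calc ‖v i‖ = Real.sqrt (‖v i‖ ^ 2) :=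
        (Real.sqrt_sq (norm_nonneg _)).symm
    _ ≤ cnorm v := Real.sqrt_le_sqrt h1

private lemma arith_pos {a r K t : ℝ} (ht0 : 0 < t)
    (hchain : (t * r / 2) ^ 2 * (a / 2) ≤ 2 * K * t) : a * r ^ 2 * t ≤ 16 * K := by
  nlinarith [hchain, ht0]

private lemma arith_rhs {K t : ℝ} (hK : 0 < K) (ht1 : 1 ≤ t)
    (hsq : Real.sqrt t ≤ t) : K * (1 + Real.sqrt t) ≤ 2 * K * t := by
  nlinarith [Real.sqrt_nonneg t]

private lemma arith_zero {a K s : ℝ} (ha : 0 < a) (hK : 0 < K) (hs1 : 1 ≤ s)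
    (hmt2 : a / 2 * (s * s) ≤ K * (1 + s)) : a * s ≤ 4 * K := by
  nlinarith

private lemma arith_zero2 {a K s t : ℝ} (ha : 0 < a) (hK : 0 < K) (hs1 : 1 ≤ s)
    (hss : s * s = t) (hbig : (4 * K / a) ^ 2 + 1 ≤ t) : 4 * K / a < s := by
  nlinarith [div_nonneg (by positivity : (0:ℝ) ≤ 4 * K) ha.le]

set_option maxHeartbeats 1000000 in
/-- Growth of `e^{tM} w` along a generalized eigenvector forces the eigenvalue to have
negative real part, or zero real part with `w` a genuine eigenvector. -/
theorem gen_eigenvector_growth {d : ℕ} (M : Matrix (Fin d) (Fin d) ℂ) (lam : ℂ)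
    (w : Fin d → ℂ) (hw : w ≠ 0) (hgen : ((M - lam • 1) ^ d).mulVec w = 0)
    (hbound : ∃ K > (0:ℝ), ∀ t : ℝ, 0 ≤ t →
      cnorm ((NormedSpace.exp ((t : ℂ) • M)).mulVec w) ≤ K * (1 + Real.sqrt t)) :
    lam.re < 0 ∨ (lam.re = 0 ∧ M.mulVec w = lam • w) := by
  classical
  obtain ⟨K, hK, hb⟩ := hbound
  by_contra hcon
  push_neg at hcon
  obtain ⟨h1, h2⟩ := hcon
  have hre : 0 ≤ lam.re := h1
  have hd0 : 0 < d := by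
    rcases Nat.eq_zero_or_pos d with h | h
    · exact absurd (funext fun i => absurd i.2 (by omega)) hw
    · exact h
  set N : Matrix (Fin d) (Fin d) ℂ := M - lam • 1 with hN
  set P : ℕ → Prop := fun j => (N ^ j).mulVec w ≠ 0 with hP
  have hP0 : P 0 := by
    simp only [hP]
    rw [pow_zero, Matrix.one_mulVec]
    exact hw
  set k : ℕ := Nat.findGreatest P d with hk
  have hPk : P k := Nat.findGreatest_spec (Nat.zero_le d) hP0
  have hPk' : (N ^ k).mulVec w ≠ 0 := hPk
  have hkd : k < d := by
    have hle : k ≤ d := Nat.findGreatest_le d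
    have hne : k ≠ d := fun h => hPk' (by rw [h]; exact hgen)
    omega
  have hvan : ∀ j : ℕ, k < j → (N ^ j).mulVec w = 0 := by
    intro j hj
    by_cases hjd : j ≤ d
    · exact not_not.mp (Nat.findGreatest_is_greatest hj hjd)
    · have hpow : N ^ j = N ^ (j - d) * N ^ d := by rw [← pow_add]; congr 1; omega
      rw [hpow, ← Matrix.mulVec_mulVec, hgen, Matrix.mulVec_zero]
  obtain ⟨i, hi⟩ : ∃ i, (N ^ k).mulVec w i ≠ 0 := Function.ne_iff.mp hPk'
  set c : ℕ → ℂ := fun j => (j.factorial : ℂ)⁻¹ * ((N ^ j).mulVec w i) with hc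
  have hck : c k ≠ 0 :=
    mul_ne_zero (inv_ne_zero (Nat.cast_ne_zero.mpr k.factorial_ne_zero)) hi
  set a : ℝ := ‖c k‖ with hadef
  have ha : 0 < a := norm_pos_iff.mpr hck
  set C : ℝ := ∑ j ∈ Finset.range k, ‖c j‖ with hC
  have hC0 : 0 ≤ C := Finset.sum_nonneg fun j _ => norm_nonneg _
  set q : ℝ → ℂ := fun t => ∑ j ∈ Finset.range (k + 1), c j * (t : ℂ) ^ j with hq
  -- coordinate identity
  have hcoord : ∀ t : ℝ, ‖(NormedSpace.exp ((t : ℂ) • M)).mulVec w i‖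
      = Real.exp (t * lam.re) * ‖q t‖ := by
    intro t
    rw [exp_mulVec_expand M lam w hgen]
    have hs : (∑ j ∈ Finset.range d,
        (((t : ℂ) ^ j * (j.factorial : ℂ)⁻¹) • ((M - lam • 1) ^ j).mulVec w)) i = q t := by
      rw [Finset.sum_apply]
      have e1 : ∀ j ∈ Finset.range d,
          (((t : ℂ) ^ j * (j.factorial : ℂ)⁻¹) • ((M - lam • 1) ^ j).mulVec w) i
            = c j * (t : ℂ) ^ j := fun j _ => by
        simp only [Pi.smul_apply, smul_eq_mul, ← hN, hc]; ring
      rw [Finset.sum_congr rfl e1]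
      simp only [hq]
      symm
      have hsub : Finset.range (k + 1) ⊆ Finset.range d := Finset.range_subset_range.mpr (by omega)
      refine Finset.sum_subset hsub fun j hjd hjn => ?_
      have hkj : k < j := by
        simp only [Finset.mem_range] at hjd hjn; omega
      simp [hc, hvan j hkj]
    rw [Pi.smul_apply, smul_eq_mul, norm_mul, Complex.norm_exp, hs]
    congr 2
    simp [Complex.mul_re]
  -- lower bound on q for t ≥ 1
  have hqlow : ∀ t : ℝ, 1 ≤ t → a * t ^ k - C * t ^ (k - 1) ≤ ‖q t‖ := by
    intro t ht
    have ht0 : 0 ≤ t := le_trans zero_le_one ht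
    have hsplit : q t = (∑ j ∈ Finset.range k, c j * (t : ℂ) ^ j) + c k * (t : ℂ) ^ k := by
      simp only [hq]; exact Finset.sum_range_succ _ _
    have habs : ‖c k * (t : ℂ) ^ k‖ = a * t ^ k := by
      rw [norm_mul, norm_pow, Complex.norm_real, Real.norm_eq_abs, abs_of_nonneg ht0, hadef]
    have htail : ‖∑ j ∈ Finset.range k, c j * (t : ℂ) ^ j‖ ≤ C * t ^ (k - 1) := by
      calc ‖∑ j ∈ Finset.range k, c j * (t : ℂ) ^ j‖
          ≤ ∑ j ∈ Finset.range k, ‖c j * (t : ℂ) ^ j‖ :=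
            norm_sum_le _ _
        _ ≤ ∑ j ∈ Finset.range k, ‖c j‖ * t ^ (k - 1) := by
            refine Finset.sum_le_sum fun j hj => ?_
            rw [norm_mul, norm_pow, Complex.norm_real, Real.norm_eq_abs, abs_of_nonneg ht0]
            refine mul_le_mul_of_nonneg_left ?_ (norm_nonneg _)
            exact pow_le_pow_right₀ ht (by
              have := Finset.mem_range.mp hj; omega)
        _ = C * t ^ (k - 1) := by rw [← Finset.sum_mul]
    calc a * t ^ k - C * t ^ (k - 1)
        ≤ ‖c k * (t : ℂ) ^ k‖
            - ‖∑ j ∈ Finset.range k, c j * (t : ℂ) ^ j‖ := by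
          rw [habs]; linarith
      _ ≤ ‖q t‖ := by
          rw [hsplit]
          have h5 := norm_sub_norm_le (c k * (t : ℂ) ^ k)
            (-(∑ j ∈ Finset.range k, c j * (t : ℂ) ^ j))
          simpa [sub_neg_eq_add, add_comm] using h5
  -- choose T0
  set T0 : ℝ := max 1 (2 * C / a + 1) with hT0
  have hT01 : 1 ≤ T0 := le_max_left _ _
  have hqlow2 : ∀ t : ℝ, T0 ≤ t → a / 2 * t ^ k ≤ ‖q t‖ := by
    intro t ht
    have ht1 : 1 ≤ t := le_trans hT01 ht
    have ht0 : 0 < t := lt_of_lt_of_le zero_lt_one ht1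
    have hCa : C * t ^ (k - 1) ≤ a / 2 * t ^ k := by
      rcases Nat.eq_zero_or_pos k with hk0 | hk0
      · have hCz : C = 0 := by rw [hC, hk0]; simp
        rw [hCz, hk0]
        simp only [zero_mul, pow_zero, mul_one]
        positivity
      · have htp : t ^ k = t ^ (k - 1) * t := by rw [← pow_succ]; congr 1; omega
        have htpos : (0:ℝ) < t ^ (k - 1) := pow_pos ht0 _
        have ht2 : 2 * C / a + 1 ≤ t := le_trans (le_max_right _ _) ht
        have hdiv2 : a * (2 * C / a) = 2 * C := by field_simp
        have h2Ca : C ≤ a / 2 * t := by nlinarith [mul_nonneg ha.le (sub_nonneg.mpr ht2)]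
        have h7 := mul_le_mul_of_nonneg_right h2Ca htpos.le
        rw [htp]
        nlinarith [h7]
    have h6 := hqlow t ht1
    linarith
  -- the main estimate
  have hmain : ∀ t : ℝ, T0 ≤ t →
      Real.exp (t * lam.re) * (a / 2 * t ^ k) ≤ K * (1 + Real.sqrt t) := by
    intro t ht
    have ht0 : 0 ≤ t := le_trans (le_trans zero_le_one hT01) ht
    calc Real.exp (t * lam.re) * (a / 2 * t ^ k)
        ≤ Real.exp (t * lam.re) * ‖q t‖ :=
          mul_le_mul_of_nonneg_left (hqlow2 t ht) (Real.exp_pos _).le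
      _ = ‖(NormedSpace.exp ((t : ℂ) • M)).mulVec w i‖ := (hcoord t).symm
      _ ≤ cnorm ((NormedSpace.exp ((t : ℂ) • M)).mulVec w) := abs_coord_le_cnorm _ i
      _ ≤ K * (1 + Real.sqrt t) := hb t ht0
  -- case split
  rcases lt_or_eq_of_le hre with hrpos | hr0
  · -- Re lam > 0
    set r : ℝ := lam.re with hr
    obtain ⟨t, htT0, hbig⟩ : ∃ t : ℝ, T0 ≤ t ∧ 16 * K / (a * r ^ 2) + 1 ≤ t :=
      ⟨max T0 (16 * K / (a * r ^ 2) + 1), le_max_left _ _, le_max_right _ _⟩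
    have ht1 : 1 ≤ t := le_trans hT01 htT0
    have ht0 : 0 < t := lt_of_lt_of_le zero_lt_one ht1
    have hmt := hmain t htT0
    have htk : (1:ℝ) ≤ t ^ k := one_le_pow₀ ht1
    have hexp : (t * r / 2) ^ 2 ≤ Real.exp (t * r) := by
      have h3 : t * r / 2 ≤ Real.exp (t * r / 2) := by
        have := Real.add_one_le_exp (t * r / 2); linarith
      have h4 : Real.exp (t * r) = Real.exp (t * r / 2) * Real.exp (t * r / 2) := by
        rw [← Real.exp_add]; congr 1; ring
      have h5 : (0:ℝ) ≤ t * r / 2 := by positivity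
      rw [h4, sq]
      exact mul_le_mul h3 h3 h5 (Real.exp_pos _).le
    have hsq : Real.sqrt t ≤ t := by
      calc Real.sqrt t ≤ Real.sqrt (t ^ 2) := Real.sqrt_le_sqrt (by nlinarith)
        _ = t := Real.sqrt_sq ht0.le
    have hRHS : K * (1 + Real.sqrt t) ≤ 2 * K * t := arith_rhs hK ht1 hsq
    have hLHS : (t * r / 2) ^ 2 * (a / 2) ≤ Real.exp (t * lam.re) * (a / 2 * t ^ k) := by
      have h6 : a / 2 ≤ a / 2 * t ^ k := by nlinarith
      have h7 : (t * r / 2) ^ 2 * (a / 2) ≤ Real.exp (t * r) * (a / 2) :=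
        mul_le_mul_of_nonneg_right hexp (by positivity)
      have h8 : Real.exp (t * r) * (a / 2) ≤ Real.exp (t * r) * (a / 2 * t ^ k) :=
        mul_le_mul_of_nonneg_left h6 (Real.exp_pos _).le
      exact le_trans h7 h8
    have har2 : 0 < a * r ^ 2 := by positivity
    have hchain : (t * r / 2) ^ 2 * (a / 2) ≤ 2 * K * t :=
      le_trans hLHS (le_trans hmt hRHS)
    have h9 : a * r ^ 2 * t ≤ 16 * K := arith_pos ht0 hchain
    have hdiv : a * r ^ 2 * (16 * K / (a * r ^ 2)) = 16 * K := by field_simp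
    have h10 := mul_le_mul_of_nonneg_left hbig har2.le
    rw [mul_add, hdiv, mul_one] at h10
    linarith
  · -- Re lam = 0
    have hr0' : lam.re = 0 := hr0.symm
    have hNw : N.mulVec w ≠ 0 := by
      have hMw := h2 hr0'
      intro hz
      apply hMw
      have hz2 : M.mulVec w - lam • w = 0 := by
        rw [hN] at hz
        rwa [Matrix.sub_mulVec, Matrix.smul_mulVec, Matrix.one_mulVec] at hz
      exact sub_eq_zero.mp hz2
    have hP1 : P 1 := by
      simp only [hP]
      rwa [pow_one]
    have hk1 : 1 ≤ k := Nat.le_findGreatest hd0 hP1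
    obtain ⟨t, htT0, hbig⟩ : ∃ t : ℝ, T0 ≤ t ∧ (4 * K / a) ^ 2 + 1 ≤ t :=
      ⟨max T0 ((4 * K / a) ^ 2 + 1), le_max_left _ _, le_max_right _ _⟩
    have ht1 : 1 ≤ t := le_trans hT01 htT0
    have ht0 : 0 < t := lt_of_lt_of_le zero_lt_one ht1
    have hmt := hmain t htT0
    rw [hr0', mul_zero, Real.exp_zero, one_mul] at hmt
    have htk : t ≤ t ^ k := by
      calc t = t ^ 1 := (pow_one t).symm
        _ ≤ t ^ k := pow_le_pow_right₀ ht1 hk1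
    obtain ⟨s, hs⟩ : ∃ s : ℝ, s = Real.sqrt t := ⟨_, rfl⟩
    rw [← hs] at hmt
    have hs1 : 1 ≤ s := hs ▸ Real.one_le_sqrt.mpr ht1
    have hss : s * s = t := hs ▸ Real.mul_self_sqrt ht0.le
    have hmt2 : a / 2 * t ≤ K * (1 + s) := by
      have h11 : a / 2 * t ≤ a / 2 * t ^ k := by nlinarith
      linarith
    have hdiv : a * (4 * K / a) = 4 * K := by field_simp
    have h9 : a * s ≤ 4 * K := arith_zero ha hK hs1 (by rw [hss]; exact hmt2)
    have h10 : 4 * K / a < s := arith_zero2 ha hK hs1 hss hbig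
    have h11 := mul_lt_mul_of_pos_left h10 ha
    rw [hdiv] at h11
    linarith
end Turnpike
end

section
/- Let f : ℝⁿ × ℝᵐ → ℝ be continuous, let (z,v) ∈ ℝⁿ × ℝᵐ, and let X̃ : [0,∞) → ℝⁿ and ũ : [0,∞) → ℝᵐ be bounded measurable functions such that ∫₀^∞ (|X̃(t) − z|² + |ũ(t) − v|²) dt < ∞. Then lim_{T→∞} (1/T) ∫₀ᵀ f(X̃(t), ũ(t)) dt = f(z,v). -/
open MeasureTheory Matrix Filter

namespace Turnpike

lemma norm_le_vnorm {n : ℕ} (x : Fin n → ℝ) : ‖x‖ ≤ vnorm x := by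
  have h0 : 0 ≤ vnorm x := Real.sqrt_nonneg _
  rw [pi_norm_le_iff_of_nonneg h0]
  intro i
  rw [Real.norm_eq_abs, show |x i| = Real.sqrt ((x i) ^ 2) by rw [Real.sqrt_sq_eq_abs]]
  exact Real.sqrt_le_sqrt
    (Finset.single_le_sum (fun j _ => sq_nonneg (x j)) (Finset.mem_univ i))

lemma vnorm_sq {n : ℕ} (x : Fin n → ℝ) : vnorm x ^ 2 = ∑ i, (x i) ^ 2 :=
  Real.sq_sqrt (Finset.sum_nonneg fun j _ => sq_nonneg (x j))

/-- Cesàro convergence of the running cost toward the steady cost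
(Step 3 in the proof of Proposition 4.2). -/
theorem average_cost_convergence {n m : ℕ} (f : (Fin n → ℝ) → (Fin m → ℝ) → ℝ)
    (hf : Continuous fun p : (Fin n → ℝ) × (Fin m → ℝ) => f p.1 p.2)
    (z : Fin n → ℝ) (v : Fin m → ℝ) (X : ℝ → Fin n → ℝ) (u : ℝ → Fin m → ℝ)
    (hXm : AEMeasurable X (volume.restrict (Set.Ici 0)))
    (hum : AEMeasurable u (volume.restrict (Set.Ici 0)))
    (hXb : ∃ C : ℝ, ∀ t : ℝ, 0 ≤ t → vnorm (X t) ≤ C)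
    (hub : ∃ C : ℝ, ∀ t : ℝ, 0 ≤ t → vnorm (u t) ≤ C)
    (hint : IntegrableOn (fun t => vnorm (X t - z) ^ 2 + vnorm (u t - v) ^ 2)
      (Set.Ici 0)) :
    Tendsto (fun T : ℝ => (1 / T) * ∫ t in (0:ℝ)..T, f (X t) (u t))
      atTop (nhds (f z v)) := by
  classical
  set F : (Fin n → ℝ) × (Fin m → ℝ) → ℝ := fun p => f p.1 p.2 with hF
  set c : ℝ := f z v with hc
  set μ : Measure ℝ := volume.restrict (Set.Ici 0) with hμ
  obtain ⟨C1, hC1⟩ := hXb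
  obtain ⟨C2, hC2⟩ := hub
  set R : ℝ := max (max C1 C2) ‖((z, v) : (Fin n → ℝ) × (Fin m → ℝ))‖ with hR
  set K : Set ((Fin n → ℝ) × (Fin m → ℝ)) := Metric.closedBall 0 R with hK
  have hKc : IsCompact K := isCompact_closedBall _ _
  have hzv : ((z, v) : (Fin n → ℝ) × (Fin m → ℝ)) ∈ K := by
    rw [hK, mem_closedBall_zero_iff]
    exact le_max_right _ _
  have hmem : ∀ t : ℝ, 0 ≤ t → ((X t, u t) : (Fin n → ℝ) × (Fin m → ℝ)) ∈ K := by
    intro t ht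
    rw [hK, mem_closedBall_zero_iff, Prod.norm_def]
    apply max_le
    · exact le_trans (le_trans (norm_le_vnorm _) (hC1 t ht))
        (le_trans (le_max_left _ _) (le_max_left _ _))
    · exact le_trans (le_trans (norm_le_vnorm _) (hC2 t ht))
        (le_trans (le_max_right _ _) (le_max_left _ _))
  obtain ⟨M, hM⟩ := hKc.exists_bound_of_continuousOn hf.continuousOn
  have hM0 : 0 ≤ M := le_trans (norm_nonneg _) (hM _ hzv)
  set g : ℝ → ℝ := fun t => f (X t) (u t) with hg
  have hgm : AEStronglyMeasurable g μ :=
    hf.comp_aestronglyMeasurable (hXm.prodMk hum).aestronglyMeasurable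
  have hgb : ∀ᵐ t ∂μ, ‖g t‖ ≤ M :=
    (ae_restrict_mem measurableSet_Ici).mono fun t ht => hM _ (hmem t ht)
  have hgint : ∀ T : ℝ, IntegrableOn g (Set.Ioc 0 T) := by
    intro T
    have hsub : Set.Ioc (0:ℝ) T ⊆ Set.Ici 0 := fun x hx => le_of_lt hx.1
    have hle : volume.restrict (Set.Ioc (0:ℝ) T) ≤ μ := Measure.restrict_mono hsub le_rfl
    exact Integrable.mono' (integrable_const M) (hgm.mono_measure hle) (ae_mono hle hgb)
  set w : ℝ → ℝ := fun t => vnorm (X t - z) ^ 2 + vnorm (u t - v) ^ 2 with hw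
  have hwint : Integrable w μ := hint
  have hwm : AEMeasurable w μ := hwint.aemeasurable
  rw [Metric.tendsto_atTop]
  intro ε hε
  have hε2 : 0 < ε / 2 := by linarith
  -- continuity at (z,v)
  obtain ⟨δ, hδpos, hδ⟩ := Metric.continuousAt_iff.mp (hf.continuousAt (x := (z, v))) (ε / 2) hε2
  -- good points
  have hgood : ∀ t : ℝ, w t < δ ^ 2 → ‖g t - c‖ ≤ ε / 2 := by
    intro t hwt
    have h1 : vnorm (X t - z) < δ := by
      have := Real.sqrt_nonneg (∑ i, ((X t - z) i) ^ 2)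
      have h2 : vnorm (X t - z) ^ 2 ≤ w t := by
        have := sq_nonneg (vnorm (u t - v)); simp only [hw]; nlinarith
      nlinarith [hδpos]
    have h2 : vnorm (u t - v) < δ := by
      have := Real.sqrt_nonneg (∑ i, ((u t - v) i) ^ 2)
      have h2 : vnorm (u t - v) ^ 2 ≤ w t := by
        have := sq_nonneg (vnorm (X t - z)); simp only [hw]; nlinarith
      nlinarith [hδpos]
    have hd : dist ((X t, u t) : (Fin n → ℝ) × (Fin m → ℝ)) (z, v) < δ := by
      rw [Prod.dist_eq]
      apply max_lt
      · exact lt_of_le_of_lt (by rw [dist_eq_norm]; exact norm_le_vnorm _) h1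
      · exact lt_of_le_of_lt (by rw [dist_eq_norm]; exact norm_le_vnorm _) h2
    have := hδ hd
    rw [Real.dist_eq] at this
    exact le_of_lt this
  -- measurable version of w and the bad set
  set w' : ℝ → ℝ := hwm.mk w with hw'
  have hww' : w =ᵐ[μ] w' := hwm.ae_eq_mk
  have hw'meas : Measurable w' := hwm.measurable_mk
  set S : Set ℝ := {t | δ ^ 2 ≤ w' t} with hS
  have hSm : MeasurableSet S := measurableSet_le measurable_const hw'meas
  have hSfin : μ S < ⊤ := by
    have hw'int : Integrable w' μ := hwint.congr hww'
    exact hw'int.measure_ge_lt_top (by positivity)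
  set K0 : ℝ := (μ S).toReal with hK0
  have hK00 : 0 ≤ K0 := ENNReal.toReal_nonneg
  -- pointwise a.e. bound
  have hbound : ∀ᵐ t ∂μ, ‖g t - c‖ ≤ S.indicator (fun _ => 2 * M) t + ε / 2 := by
    filter_upwards [hww', hgb] with t heq hb
    by_cases hts : t ∈ S
    · rw [Set.indicator_of_mem hts]
      have hcM : ‖c‖ ≤ M := hM _ hzv
      calc ‖g t - c‖ ≤ ‖g t‖ + ‖c‖ := norm_sub_le _ _
        _ ≤ 2 * M + ε / 2 := by linarith
    · rw [Set.indicator_of_notMem hts]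
      have : w t < δ ^ 2 := by rw [heq]; exact lt_of_not_ge hts
      have := hgood t this
      linarith
  set D : ℝ := 2 * M * K0 with hD
  have hD0 : 0 ≤ D := by positivity
  refine ⟨max 1 (2 * D / ε + 1), fun T hT => ?_⟩
  have hT1 : (1:ℝ) ≤ T := le_trans (le_max_left _ _) hT
  have hTpos : 0 < T := lt_of_lt_of_le one_pos hT1
  have hT2 : 2 * D / ε + 1 ≤ T := le_trans (le_max_right _ _) hT
  -- the main integral estimate
  have hkey : ∫ t in Set.Ioc 0 T, ‖g t - c‖ ≤ D + (ε / 2) * T := by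
    have hsub : Set.Ioc (0:ℝ) T ⊆ Set.Ici 0 := fun x hx => le_of_lt hx.1
    have hle : volume.restrict (Set.Ioc (0:ℝ) T) ≤ μ := Measure.restrict_mono hsub le_rfl
    have hbound' : ∀ᵐ t ∂(volume.restrict (Set.Ioc (0:ℝ) T)),
        ‖g t - c‖ ≤ S.indicator (fun _ => 2 * M) t + ε / 2 := ae_mono hle hbound
    have hint1 : Integrable (fun t => ‖g t - c‖) (volume.restrict (Set.Ioc (0:ℝ) T)) :=
      ((hgint T).sub (integrable_const c)).norm
    have hint2 : Integrable (fun t => S.indicator (fun _ => 2 * M) t + ε / 2)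
        (volume.restrict (Set.Ioc (0:ℝ) T)) :=
      ((integrable_const (2 * M)).indicator hSm).add (integrable_const _)
    calc ∫ t in Set.Ioc 0 T, ‖g t - c‖
        ≤ ∫ t in Set.Ioc 0 T, (S.indicator (fun _ => 2 * M) t + ε / 2) :=
          integral_mono_ae hint1 hint2 hbound'
      _ = (∫ t in Set.Ioc 0 T, S.indicator (fun _ => 2 * M) t) + (ε / 2) * T := by
          rw [integral_add ((integrable_const (2 * M)).indicator hSm) (integrable_const _)]
          congr 1
          rw [integral_const, measureReal_def, Measure.restrict_apply_univ, Real.volume_Ioc, smul_eq_mul,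
            ENNReal.toReal_ofReal (by linarith : (0:ℝ) ≤ T - 0)]
          ring
      _ ≤ D + (ε / 2) * T := by
          have h1 : ∫ t in Set.Ioc 0 T, S.indicator (fun _ => 2 * M) t
              = 2 * M * ((volume.restrict (Set.Ioc (0:ℝ) T)) S).toReal := by
            rw [integral_indicator hSm, setIntegral_const, smul_eq_mul, mul_comm, measureReal_def]
          have h2 : ((volume.restrict (Set.Ioc (0:ℝ) T)) S) ≤ μ S := hle S
          have h3 : ((volume.restrict (Set.Ioc (0:ℝ) T)) S).toReal ≤ K0 :=
            ENNReal.toReal_mono hSfin.ne h2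
          rw [h1, hD]
          have := mul_le_mul_of_nonneg_left h3 (by linarith : (0:ℝ) ≤ 2 * M)
          linarith
  -- from interval integral to the estimate
  have hii : IntervalIntegrable g volume 0 T := by
    rw [intervalIntegrable_iff_integrableOn_Ioc_of_le (le_of_lt hTpos)]
    exact hgint T
  have hsplit : (1 / T) * (∫ t in (0:ℝ)..T, g t) - c
      = (1 / T) * ∫ t in (0:ℝ)..T, (g t - c) := by
    rw [intervalIntegral.integral_sub hii (intervalIntegrable_const),
      intervalIntegral.integral_const, smul_eq_mul, sub_zero]
    field_simp
  have habs : ‖(1 / T) * (∫ t in (0:ℝ)..T, g t) - c‖ ≤ (1 / T) * (D + (ε / 2) * T) := by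
    rw [hsplit, norm_mul]
    have h1 : ‖∫ t in (0:ℝ)..T, (g t - c)‖ ≤ ∫ t in Set.Ioc 0 T, ‖g t - c‖ := by
      rw [intervalIntegral.integral_of_le (le_of_lt hTpos)]
      exact norm_integral_le_integral_norm _
    have h2 : ‖(1:ℝ) / T‖ = 1 / T := by
      rw [Real.norm_eq_abs, abs_of_pos (by positivity)]
    rw [h2]
    exact mul_le_mul_of_nonneg_left (le_trans h1 hkey) (by positivity)
  have hdiv : (1 / T) * (D + (ε / 2) * T) < ε := by
    have hεT : ε * T ≥ 2 * D + ε := by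
      have := mul_le_mul_of_nonneg_left hT2 (le_of_lt hε)
      have heq : ε * (2 * D / ε + 1) = 2 * D + ε := by field_simp
      linarith [heq ▸ this]
    rw [div_mul_eq_mul_div, one_mul, div_lt_iff₀ hTpos]
    nlinarith
  rw [Real.dist_eq]
  calc |(1 / T) * (∫ t in (0:ℝ)..T, f (X t) (u t)) - c|
      ≤ (1 / T) * (D + (ε / 2) * T) := habs
    _ < ε := hdiv

end Turnpike
end

section
/- Let A ∈ ℝ^{n×n}, B ∈ ℝ^{n×m}, b ∈ ℝⁿ, fix a Kalman controllable decomposition of (A,B) with blocks A₁₁, A₁₂, A₂₂, B₁ and matrices P₁, P₂, assume (A1): there exists c ∈ ℝ^{n−k} with A₂₂ c = P₂ᵀ b, and let f satisfy (A2): f ∈ C²(ℝⁿ×ℝᵐ) with ∇²f ⪰ δ I_{n+m} everywhere for some δ > 0. Then for each x ∈ 𝒳, Problem (O) admits a unique solution, i.e. there is a unique (x*,u*) ∈ 𝒱_x with f(x*,u*) = inf_{(z,u) ∈ 𝒱_x} f(z,u). -/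
open MeasureTheory Matrix Filter

namespace Turnpike

/- ===== Auxiliary lemmas for Theorem 5.2 ===== -/

section Aux

lemma aux_sc {E : Type*} [NormedAddCommGroup E] [NormedSpace ℝ E] (F : E → ℝ) (Q : E → ℝ)
    (δ : ℝ) (hF : ContDiff ℝ 2 F)
    (hH : ∀ p w : E, δ * Q w ≤ fderiv ℝ (fderiv ℝ F) p w w)
    (p q : E) (t : ℝ) (ht0 : 0 ≤ t) (ht1 : t ≤ 1) :
    F (t • p + (1 - t) • q) ≤ t * F p + (1 - t) * F q - δ / 2 * (t * (1 - t)) * Q (p - q) := by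
  set v := p - q with hv
  have hFd : Differentiable ℝ F := hF.differentiable (by norm_num)
  have hF' : ContDiff ℝ 1 (fderiv ℝ F) := hF.fderiv_right (by norm_num)
  have hline : ∀ s : ℝ, HasDerivAt (fun r : ℝ => q + r • v) v s := by
    intro s
    simpa using ((hasDerivAt_id s).smul_const v).const_add q
  set Qv := Q v with hQv
  set g : ℝ → ℝ := fun s => F (q + s • v) - δ / 2 * Qv * s ^ 2 with hg
  set g' : ℝ → ℝ := fun s => fderiv ℝ F (q + s • v) v - δ * Qv * s with hg'
  have hgd : ∀ s, HasDerivAt g (g' s) s := by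
    intro s
    have h1 : HasDerivAt (fun r : ℝ => F (q + r • v)) (fderiv ℝ F (q + s • v) v) s :=
      (hFd (q + s • v)).hasFDerivAt.comp_hasDerivAt s (hline s)
    have h2 : HasDerivAt (fun r : ℝ => δ / 2 * Qv * r ^ 2) (δ * Qv * s) s := by
      have := (hasDerivAt_pow 2 s).const_mul (δ / 2 * Qv)
      refine this.congr_deriv ?_
      ring
    exact h1.sub h2
  have hgd2 : ∀ s, HasDerivAt g' (fderiv ℝ (fderiv ℝ F) (q + s • v) v v - δ * Qv) s := by
    intro s
    have h1 : HasDerivAt (fun r : ℝ => fderiv ℝ F (q + r • v))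
        (fderiv ℝ (fderiv ℝ F) (q + s • v) v) s :=
      ((hF'.differentiable one_ne_zero) (q + s • v)).hasFDerivAt.comp_hasDerivAt s (hline s)
    have h2 := h1.clm_apply (hasDerivAt_const s v)
    simp only [map_zero, add_zero] at h2
    have h3 : HasDerivAt (fun r : ℝ => δ * Qv * r) (δ * Qv) s := by
      simpa using (hasDerivAt_id s).const_mul (δ * Qv)
    exact h2.sub h3
  have hderiv_g : deriv g = g' := funext fun s => (hgd s).deriv
  have hconv : ConvexOn ℝ Set.univ g := by
    apply convexOn_univ_of_deriv2_nonneg (fun s => (hgd s).differentiableAt)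
    · rw [hderiv_g]; exact fun s => (hgd2 s).differentiableAt
    · intro s
      have : deriv (deriv g) s = fderiv ℝ (fderiv ℝ F) (q + s • v) v v - δ * Qv := by
        rw [hderiv_g]; exact (hgd2 s).deriv
      simp only [Function.iterate_succ, Function.iterate_zero, Function.comp_apply, id_eq]
      rw [this]
      linarith [hH (q + s • v) v]
  have h01 : g t ≤ (1 - t) * g 0 + t * g 1 := by
    have := hconv.2 (Set.mem_univ (0:ℝ)) (Set.mem_univ (1:ℝ)) (by linarith : (0:ℝ) ≤ 1 - t) ht0
      (by ring)
    simpa using this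
  have e0 : g 0 = F q := by simp [g]
  have e1 : g 1 = F p - δ / 2 * Qv := by simp [g, hv]
  have et : q + t • v = t • p + (1 - t) • q := by
    simp [hv, smul_sub, sub_smul]; abel
  have : F (t • p + (1 - t) • q) - δ / 2 * Qv * t ^ 2 ≤ (1 - t) * F q + t * (F p - δ / 2 * Qv) := by
    rw [← et, ← e0, ← e1]; simpa [g] using h01
  nlinarith [this]

variable {n m : ℕ} (f : (Fin n → ℝ) → (Fin m → ℝ) → ℝ)

/-- The function `f` viewed as a function on the product space. -/
noncomputable def auxFc : (Fin n → ℝ) × (Fin m → ℝ) → ℝ := fun p => f p.1 p.2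

/-- Basis direction in the product space corresponding to `i : Fin n ⊕ Fin m`. -/
def auxEps (i : Fin n ⊕ Fin m) : (Fin n → ℝ) × (Fin m → ℝ) :=
  (fun a => (Pi.single i 1 : Fin n ⊕ Fin m → ℝ) (Sum.inl a),
   fun a => (Pi.single i 1 : Fin n ⊕ Fin m → ℝ) (Sum.inr a))

lemma aux_hess_eq (hF : ContDiff ℝ 2 (auxFc f)) (x : Fin n → ℝ) (u : Fin m → ℝ)
    (i j : Fin n ⊕ Fin m) :
    hessMat f x u i j = fderiv ℝ (fderiv ℝ (auxFc f)) (x, u) (auxEps i) (auxEps j) := by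
  have hFd : Differentiable ℝ (auxFc f) := hF.differentiable (by norm_num)
  have hF' : ContDiff ℝ 1 (fderiv ℝ (auxFc f)) := hF.fderiv_right (by norm_num)
  have key : hessMat f x u i j
      = deriv (fun s : ℝ => deriv (fun r : ℝ =>
          auxFc f (((x, u) + s • auxEps i) + r • auxEps j)) 0) 0 := rfl
  rw [key]
  have hline : ∀ (w c : (Fin n → ℝ) × (Fin m → ℝ)) (s : ℝ),
      HasDerivAt (fun r : ℝ => c + r • w) w s := fun w c s => by
    simpa using ((hasDerivAt_id s).smul_const w).const_add c
  have inner_eq : ∀ s : ℝ, deriv (fun r : ℝ => auxFc f (((x, u) + s • auxEps i) + r • auxEps j)) 0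
      = fderiv ℝ (auxFc f) ((x, u) + s • auxEps i + (0:ℝ) • auxEps j) (auxEps j) := by
    intro s
    exact ((hFd _).hasFDerivAt.comp_hasDerivAt 0
      (hline (auxEps j) ((x,u) + s • auxEps i) 0)).deriv
  have inner_eq' : ∀ s : ℝ, deriv (fun r : ℝ => auxFc f (((x, u) + s • auxEps i) + r • auxEps j)) 0
      = fderiv ℝ (auxFc f) ((x, u) + s • auxEps i) (auxEps j) := by
    intro s; rw [inner_eq s]; simp
  rw [funext inner_eq']
  have h1 : HasDerivAt (fun s : ℝ => fderiv ℝ (auxFc f) ((x, u) + s • auxEps i))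
      (fderiv ℝ (fderiv ℝ (auxFc f)) ((x,u) + (0:ℝ) • auxEps i) (auxEps i)) 0 :=
    ((hF'.differentiable one_ne_zero) _).hasFDerivAt.comp_hasDerivAt 0 (hline (auxEps i) (x,u) 0)
  have h2 := h1.clm_apply (hasDerivAt_const 0 (auxEps j))
  simp only [map_zero, add_zero, zero_smul] at h2 ⊢
  exact h2.deriv

lemma aux_quad_ge (δ : ℝ)
    (hPSD : ∀ (x : Fin n → ℝ) (u : Fin m → ℝ),
      (hessMat f x u - δ • (1 : Matrix (Fin n ⊕ Fin m) (Fin n ⊕ Fin m) ℝ)).PosSemidef)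
    (hF : ContDiff ℝ 2 (auxFc f)) (p w : (Fin n → ℝ) × (Fin m → ℝ)) :
    δ * ((∑ a, w.1 a ^ 2) + (∑ a, w.2 a ^ 2)) ≤ fderiv ℝ (fderiv ℝ (auxFc f)) p w w := by
  set v : Fin n ⊕ Fin m → ℝ := Sum.elim w.1 w.2 with hv
  have hw : w = ∑ i, v i • auxEps i := by
    ext a
    · rw [Prod.fst_sum]
      simp only [auxEps, Prod.smul_mk, Finset.sum_apply, Pi.smul_apply, smul_eq_mul,
        Pi.single_apply]
      simp [Finset.sum_ite_eq, hv]
    · rw [Prod.snd_sum]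
      simp only [auxEps, Prod.smul_mk, Finset.sum_apply, Pi.smul_apply, smul_eq_mul,
        Pi.single_apply]
      simp [Finset.sum_ite_eq, hv]
  set H2 := fderiv ℝ (fderiv ℝ (auxFc f)) p with hH2
  set M := hessMat f p.1 p.2 with hM
  have expand : H2 w w = ∑ i, ∑ j, v i * v j * M i j := by
    conv_lhs => rw [hw]
    simp only [map_sum, _root_.map_smul, ContinuousLinearMap.sum_apply,
      ContinuousLinearMap.smul_apply, smul_eq_mul]
    rw [Finset.sum_comm]
    refine Finset.sum_congr rfl fun i _ => ?_
    rw [Finset.mul_sum]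
    refine Finset.sum_congr rfl fun j _ => ?_
    rw [hM, aux_hess_eq f hF p.1 p.2 j i, ← hH2]
    ring
  have hquad : (0:ℝ) ≤ v ⬝ᵥ ((M - δ • 1) *ᵥ v) := by
    simpa using (hPSD p.1 p.2).dotProduct_mulVec_nonneg v
  have hA : v ⬝ᵥ (M *ᵥ v) = ∑ i, ∑ j, v i * v j * M i j := by
    simp only [dotProduct, Matrix.mulVec, Finset.mul_sum]
    exact Finset.sum_congr rfl fun i _ => Finset.sum_congr rfl fun j _ => by ring
  have hB : v ⬝ᵥ ((δ • (1 : Matrix (Fin n ⊕ Fin m) (Fin n ⊕ Fin m) ℝ)) *ᵥ v)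
      = δ * ∑ i, v i ^ 2 := by
    rw [Matrix.smul_mulVec, Matrix.one_mulVec]
    simp only [dotProduct, Pi.smul_apply, smul_eq_mul, Finset.mul_sum]
    exact Finset.sum_congr rfl fun i _ => by ring
  have e1 : v ⬝ᵥ ((M - δ • 1) *ᵥ v) = (∑ i, ∑ j, v i * v j * M i j) - δ * ∑ i, v i ^ 2 := by
    rw [Matrix.sub_mulVec, dotProduct_sub, hA, hB]
  have e2 : ∑ i, v i ^ 2 = (∑ a, w.1 a ^ 2) + (∑ a, w.2 a ^ 2) := by
    rw [Fintype.sum_sum_type]; simp [hv]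
  rw [expand]
  rw [e1, e2] at hquad
  linarith

lemma aux_ctrb_surj {k m : ℕ} (A : Matrix (Fin k) (Fin k) ℝ) (B : Matrix (Fin k) (Fin m) ℝ)
    (h : Controllable A B) (w : Fin k → ℝ) :
    ∃ z u, A.mulVec z + B.mulVec u = w := by
  set L := Matrix.mulVecLin (Matrix.fromCols A B) with hL
  have hrange : LinearMap.range L = ⊤ := by
    by_contra hne
    obtain ⟨f, hf0, hfmap⟩ := Submodule.exists_dual_map_eq_bot_of_lt_top
      (lt_top_iff_ne_top.mpr hne) inferInstance
    have hker : ∀ y ∈ LinearMap.range L, f y = 0 := by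
      intro y hy
      have : f y ∈ (LinearMap.range L).map f := Submodule.mem_map_of_mem hy
      rw [hfmap] at this
      simpa using this
    have hmem : ∀ (z : Fin k → ℝ) (u : Fin m → ℝ),
        A.mulVec z + B.mulVec u ∈ LinearMap.range L := by
      intro z u
      exact ⟨Sum.elim z u, by simp [hL, Matrix.mulVecLin_apply]⟩
    set v : Fin k → ℝ := fun i => f (Pi.single i 1) with hv
    have hfy : ∀ y : Fin k → ℝ, f y = ∑ i, y i * v i := by
      intro y
      conv_lhs => rw [← Finset.univ_sum_single y]
      rw [map_sum]
      refine Finset.sum_congr rfl fun i _ => ?_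
      have : (Pi.single i (y i) : Fin k → ℝ) = y i • (Pi.single i 1 : Fin k → ℝ) := by
        funext j; by_cases hj : j = i <;> simp [hj, Pi.single_apply]
      rw [this, _root_.map_smul, smul_eq_mul, hv]
    have hv0 : v = 0 := by
      apply h
      intro i _
      funext j
      have col : (A ^ i * B).mulVec (Pi.single j 1) ∈ LinearMap.range L := by
        cases i with
        | zero =>
          simpa using hmem 0 (Pi.single j 1)
        | succ i' =>
          have : (A ^ (i' + 1) * B).mulVec (Pi.single j 1)
              = A.mulVec ((A ^ i' * B).mulVec (Pi.single j 1)) := by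
            simp only [Matrix.mulVec_single_one]
            funext r
            simp only [pow_succ', Matrix.mul_apply, Matrix.mulVec, dotProduct, Matrix.col_apply]
            simp only [Finset.sum_mul, Finset.mul_sum]
            rw [Finset.sum_comm]
            exact Finset.sum_congr rfl fun a _ => Finset.sum_congr rfl fun c _ => by ring
          rw [this]
          simpa using hmem ((A ^ i' * B).mulVec (Pi.single j 1)) 0
      have := hker _ col
      rw [hfy] at this
      have e : ∑ r, (A ^ i * B).mulVec (Pi.single j 1) r * v r
          = Matrix.vecMul v (A ^ i * B) j := by
        simp only [Matrix.mulVec_single_one, Matrix.col_apply, Matrix.vecMul, dotProduct]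
        exact Finset.sum_congr rfl fun r _ => by ring
      rw [e] at this
      simpa using this
    exact hf0 (LinearMap.ext fun y => by rw [hfy, hv0]; simp)
  obtain ⟨p, hp⟩ := (LinearMap.range_eq_top.mp hrange) w
  refine ⟨fun i => p (Sum.inl i), fun j => p (Sum.inr j), ?_⟩
  have hpe : p = Sum.elim (fun i => p (Sum.inl i)) (fun j => p (Sum.inr j)) := by
    funext a; cases a <;> rfl
  rw [← hp, hL]
  simp only [Matrix.mulVecLin_apply]
  rw [hpe]
  simp

end Aux

set_option maxHeartbeats 2000000 in
/-- Unique solvability of the static Problem (O) (Theorem 5.2). -/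
theorem static_problem_unique_solvable {n k l m : ℕ} (A : Matrix (Fin n) (Fin n) ℝ)
    (B : Matrix (Fin n) (Fin m) ℝ) (P₁ : Matrix (Fin n) (Fin k) ℝ)
    (P₂ : Matrix (Fin n) (Fin l) ℝ) (hK : KalmanDec n k l m A B P₁ P₂)
    (b : Fin n → ℝ) (c : Fin l → ℝ) (hc : (P₂ᵀ * A * P₂).mulVec c = P₂ᵀ.mulVec b)
    (f : (Fin n → ℝ) → (Fin m → ℝ) → ℝ) (δ : ℝ) (hδ : 0 < δ) (hA2 : A2Hyp f δ)
    (x : Fin n → ℝ) (hx : Feas (P₂ᵀ * A * P₂) (P₂ᵀ.mulVec x + c)) :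
    ∃! p : (Fin n → ℝ) × (Fin m → ℝ), InV A B b P₂ c x p.1 p.2 ∧
      ∀ (z : Fin n → ℝ) (w : Fin m → ℝ), InV A B b P₂ c x z w → f p.1 p.2 ≤ f z w := by
  classical
  set F : (Fin n → ℝ) × (Fin m → ℝ) → ℝ := auxFc f with hFdef
  have hFc : ContDiff ℝ 2 F := hA2.1
  set Q : (Fin n → ℝ) × (Fin m → ℝ) → ℝ :=
    fun w => (∑ a, w.1 a ^ 2) + (∑ a, w.2 a ^ 2) with hQdef
  have hQ0 : ∀ w, 0 ≤ Q w := fun w =>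
    add_nonneg (Finset.sum_nonneg fun _ _ => sq_nonneg _)
      (Finset.sum_nonneg fun _ _ => sq_nonneg _)
  have hSC : ∀ p q : (Fin n → ℝ) × (Fin m → ℝ), ∀ t : ℝ, 0 ≤ t → t ≤ 1 →
      F (t • p + (1 - t) • q) ≤ t * F p + (1 - t) * F q - δ / 2 * (t * (1 - t)) * Q (p - q) :=
    fun p q t h0 h1 =>
      aux_sc F Q δ hFc (fun p w => aux_quad_ge f δ hA2.2 hFc p w) p q t h0 h1
  set S : Set ((Fin n → ℝ) × (Fin m → ℝ)) := {p | InV A B b P₂ c x p.1 p.2} with hSdef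
  -- S is nonempty
  obtain ⟨y₁, hy₁, y₂, hy₂, hxw⟩ := hx
  have hy₂' : (P₂ᵀ * A * P₂).mulVec y₂ = 0 := hy₂
  have hP21 : P₂ᵀ * P₁ = 0 := by
    have := congrArg Matrix.transpose hK.orth₁₂
    simpa [Matrix.transpose_mul] using this
  obtain ⟨z₁, u₀, hz₁⟩ := aux_ctrb_surj (P₁ᵀ * A * P₁) (P₁ᵀ * B) hK.ctrb
    (-((P₁ᵀ * A * P₂).mulVec (y₂ - c) + P₁ᵀ.mulVec b))
  set z₀ : Fin n → ℝ := P₁.mulVec z₁ + P₂.mulVec (y₂ - c) with hz₀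
  have hP2z : P₂ᵀ.mulVec z₀ + c = y₂ := by
    rw [hz₀, Matrix.mulVec_add, Matrix.mulVec_mulVec, Matrix.mulVec_mulVec, hP21, hK.orth₂]
    simp
  have hmain : A.mulVec z₀ + B.mulVec u₀ + b = 0 := by
    set r : Fin n → ℝ := A.mulVec z₀ + B.mulVec u₀ + b with hr
    have h1 : P₁ᵀ.mulVec r = 0 := by
      have expand : P₁ᵀ.mulVec r
          = ((P₁ᵀ * A * P₁).mulVec z₁ + (P₁ᵀ * B).mulVec u₀)
            + ((P₁ᵀ * A * P₂).mulVec (y₂ - c) + P₁ᵀ.mulVec b) := by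
        simp only [hr, hz₀, Matrix.mulVec_add, Matrix.mulVec_mulVec, ← Matrix.mul_assoc]
        abel
      rw [expand, hz₁]
      abel
    have h2 : P₂ᵀ.mulVec r = 0 := by
      have expand : P₂ᵀ.mulVec r
          = (P₂ᵀ * A * P₁).mulVec z₁
            + ((P₂ᵀ * A * P₂).mulVec y₂ - (P₂ᵀ * A * P₂).mulVec c)
            + (P₂ᵀ * B).mulVec u₀ + P₂ᵀ.mulVec b := by
        simp only [hr, hz₀, Matrix.mulVec_add, Matrix.mulVec_mulVec, ← Matrix.mul_assoc,
          Matrix.mulVec_sub]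
        try abel
      rw [expand, hK.lowerZero, hK.inputZero, hy₂', hc]
      try simp
    have hrc : r = P₁.mulVec (P₁ᵀ.mulVec r) + P₂.mulVec (P₂ᵀ.mulVec r) := by
      rw [Matrix.mulVec_mulVec, Matrix.mulVec_mulVec, ← Matrix.add_mulVec, hK.complete,
        Matrix.one_mulVec]
    rw [hr] at hrc h1 h2 ⊢
    rw [hrc, h1, h2]
    simp
  have hp₀S : (z₀, u₀) ∈ S := by
    refine ⟨hmain, ?_, ?_⟩
    · show (P₂ᵀ * A * P₂).mulVec (P₂ᵀ.mulVec z₀ + c) = 0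
      rw [hP2z]; exact hy₂'
    · show (P₂ᵀ.mulVec x + c) - (P₂ᵀ.mulVec z₀ + c) ∈ G1 (P₂ᵀ * A * P₂)
      rw [hP2z, hxw]
      simpa using hy₁
  set p₀ : (Fin n → ℝ) × (Fin m → ℝ) := (z₀, u₀) with hp₀def
  -- S is closed
  have hmv : ∀ {a b' : ℕ} (M : Matrix (Fin a) (Fin b') ℝ),
      Continuous (fun y : Fin b' → ℝ => M.mulVec y) := by
    intro a b' M
    have : (fun y : Fin b' → ℝ => M.mulVec y) = ⇑(Matrix.mulVecLin M) := by
      funext y; simp [Matrix.mulVecLin_apply]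
    rw [this]
    exact (Matrix.mulVecLin M).continuous_of_finiteDimensional
  have hG1closed : IsClosed (G1 (P₂ᵀ * A * P₂)) := by
    have hcont : Continuous (fun y : Fin l → ℝ => (fun i => (y i : ℂ))) :=
      continuous_pi fun i => Complex.continuous_ofReal.comp (continuous_apply i)
    exact IsClosed.preimage hcont (Submodule.closed_of_finiteDimensional _)
  have hSclosed : IsClosed S := by
    have h1 : IsClosed {p : (Fin n → ℝ) × (Fin m → ℝ) |
        A.mulVec p.1 + B.mulVec p.2 + b = 0} :=
      isClosed_eq ((((hmv A).comp continuous_fst).add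
        ((hmv B).comp continuous_snd)).add continuous_const) continuous_const
    have h2 : IsClosed {p : (Fin n → ℝ) × (Fin m → ℝ) |
        (P₂ᵀ * A * P₂).mulVec (P₂ᵀ.mulVec p.1 + c) = 0} :=
      isClosed_eq ((hmv (P₂ᵀ * A * P₂)).comp
        (((hmv P₂ᵀ).comp continuous_fst).add continuous_const)) continuous_const
    have h3 : IsClosed {p : (Fin n → ℝ) × (Fin m → ℝ) |
        (P₂ᵀ.mulVec x + c) - (P₂ᵀ.mulVec p.1 + c) ∈ G1 (P₂ᵀ * A * P₂)} :=
      hG1closed.preimage (continuous_const.sub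
        (((hmv P₂ᵀ).comp continuous_fst).add continuous_const))
    have hSeq : S = {p : (Fin n → ℝ) × (Fin m → ℝ) | A.mulVec p.1 + B.mulVec p.2 + b = 0}
        ∩ ({p | (P₂ᵀ * A * P₂).mulVec (P₂ᵀ.mulVec p.1 + c) = 0}
          ∩ {p | (P₂ᵀ.mulVec x + c) - (P₂ᵀ.mulVec p.1 + c) ∈ G1 (P₂ᵀ * A * P₂)}) := rfl
    rw [hSeq]
    exact h1.inter (h2.inter h3)
  -- S is closed under affine combinations
  have hG1comb : ∀ (t : ℝ) (a a' : Fin l → ℝ), a ∈ G1 (P₂ᵀ * A * P₂) →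
      a' ∈ G1 (P₂ᵀ * A * P₂) → t • a + (1 - t) • a' ∈ G1 (P₂ᵀ * A * P₂) := by
    intro t a a' ha ha'
    simp only [G1, Set.mem_setOf_eq] at ha ha' ⊢
    have hcast : (fun i => (((t • a + (1 - t) • a') i : ℝ) : ℂ))
        = (t : ℂ) • (fun i => ((a i : ℝ) : ℂ)) + ((1 - t : ℝ) : ℂ) • (fun i => ((a' i : ℝ) : ℂ)) := by
      funext i
      simp only [Pi.add_apply, Pi.smul_apply, smul_eq_mul]
      push_cast
      ring
    rw [hcast]
    exact Submodule.add_mem _ (Submodule.smul_mem _ _ ha) (Submodule.smul_mem _ _ ha')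
  have hcomb : ∀ p ∈ S, ∀ q ∈ S, ∀ t : ℝ, t • p + (1 - t) • q ∈ S := by
    intro p hp q hq t
    obtain ⟨hp1, hp2, hp3⟩ := hp
    obtain ⟨hq1, hq2, hq3⟩ := hq
    have hp2' : (P₂ᵀ * A * P₂).mulVec (P₂ᵀ.mulVec p.1 + c) = 0 := hp2
    have hq2' : (P₂ᵀ * A * P₂).mulVec (P₂ᵀ.mulVec q.1 + c) = 0 := hq2
    have hfst : (t • p + (1 - t) • q).1 = t • p.1 + (1 - t) • q.1 := rfl
    have hsnd : (t • p + (1 - t) • q).2 = t • p.2 + (1 - t) • q.2 := rfl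
    have ecomb : P₂ᵀ.mulVec (t • p.1 + (1 - t) • q.1) + c
        = t • (P₂ᵀ.mulVec p.1 + c) + (1 - t) • (P₂ᵀ.mulVec q.1 + c) := by
      rw [Matrix.mulVec_add, Matrix.mulVec_smul, Matrix.mulVec_smul]
      module
    refine ⟨?_, ?_, ?_⟩
    · show A.mulVec (t • p + (1 - t) • q).1 + B.mulVec (t • p + (1 - t) • q).2 + b = 0
      rw [hfst, hsnd]
      have e : A.mulVec (t • p.1 + (1 - t) • q.1) + B.mulVec (t • p.2 + (1 - t) • q.2) + b
          = t • (A.mulVec p.1 + B.mulVec p.2 + b) + (1 - t) • (A.mulVec q.1 + B.mulVec q.2 + b) := by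
        rw [Matrix.mulVec_add, Matrix.mulVec_add, Matrix.mulVec_smul, Matrix.mulVec_smul,
          Matrix.mulVec_smul, Matrix.mulVec_smul]
        module
      rw [e, hp1, hq1]
      simp
    · show (P₂ᵀ * A * P₂).mulVec (P₂ᵀ.mulVec (t • p + (1 - t) • q).1 + c) = 0
      rw [hfst, ecomb, Matrix.mulVec_add, Matrix.mulVec_smul, Matrix.mulVec_smul, hp2', hq2']
      simp
    · show (P₂ᵀ.mulVec x + c) - (P₂ᵀ.mulVec (t • p + (1 - t) • q).1 + c) ∈ G1 (P₂ᵀ * A * P₂)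
      rw [hfst, ecomb]
      have e : (P₂ᵀ.mulVec x + c) - (t • (P₂ᵀ.mulVec p.1 + c) + (1 - t) • (P₂ᵀ.mulVec q.1 + c))
          = t • ((P₂ᵀ.mulVec x + c) - (P₂ᵀ.mulVec p.1 + c)) + (1 - t) • ((P₂ᵀ.mulVec x + c) - (P₂ᵀ.mulVec q.1 + c)) := by
        module
      rw [e]
      exact hG1comb t _ _ hp3 hq3
  -- norm comparison
  have hQnorm : ∀ w : (Fin n → ℝ) × (Fin m → ℝ), ‖w‖ ^ 2 ≤ Q w := by
    intro w
    show ‖w‖ ^ 2 ≤ (∑ a, w.1 a ^ 2) + (∑ a, w.2 a ^ 2)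
    have hQw0 : (0:ℝ) ≤ (∑ a, w.1 a ^ 2) + (∑ a, w.2 a ^ 2) :=
      add_nonneg (Finset.sum_nonneg fun _ _ => sq_nonneg _)
        (Finset.sum_nonneg fun _ _ => sq_nonneg _)
    have hs : ‖w‖ ≤ Real.sqrt ((∑ a, w.1 a ^ 2) + (∑ a, w.2 a ^ 2)) := by
      rw [Prod.norm_def]
      apply max_le
      · rw [pi_norm_le_iff_of_nonneg (Real.sqrt_nonneg _)]
        intro a
        rw [Real.norm_eq_abs]
        apply Real.abs_le_sqrt
        calc w.1 a ^ 2 ≤ ∑ a', w.1 a' ^ 2 :=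
              Finset.single_le_sum (f := fun a' => w.1 a' ^ 2)
                (fun _ _ => sq_nonneg _) (Finset.mem_univ a)
          _ ≤ (∑ a', w.1 a' ^ 2) + (∑ a', w.2 a' ^ 2) :=
              le_add_of_nonneg_right (Finset.sum_nonneg fun _ _ => sq_nonneg _)
      · rw [pi_norm_le_iff_of_nonneg (Real.sqrt_nonneg _)]
        intro a
        rw [Real.norm_eq_abs]
        apply Real.abs_le_sqrt
        calc w.2 a ^ 2 ≤ ∑ a', w.2 a' ^ 2 :=
              Finset.single_le_sum (f := fun a' => w.2 a' ^ 2)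
                (fun _ _ => sq_nonneg _) (Finset.mem_univ a)
          _ ≤ (∑ a', w.1 a' ^ 2) + (∑ a', w.2 a' ^ 2) :=
              le_add_of_nonneg_left (Finset.sum_nonneg fun _ _ => sq_nonneg _)
    calc ‖w‖ ^ 2 ≤ Real.sqrt ((∑ a, w.1 a ^ 2) + (∑ a, w.2 a ^ 2)) ^ 2 :=
          pow_le_pow_left₀ (norm_nonneg _) hs 2
      _ = (∑ a, w.1 a ^ 2) + (∑ a, w.2 a ^ 2) := Real.sq_sqrt hQw0
  have hQeq0 : ∀ w : (Fin n → ℝ) × (Fin m → ℝ), Q w ≤ 0 → w = 0 := by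
    intro w hw
    have h1 : ‖w‖ = 0 := by nlinarith [norm_nonneg w, hQnorm w]
    exact norm_eq_zero.mp h1
  -- existence of a minimizer
  have hFcont : Continuous F := hFc.continuous
  obtain ⟨pm, hpmmem, hpmmin⟩ := (isCompact_closedBall p₀ 1).exists_isMinOn
    ⟨p₀, Metric.mem_closedBall_self zero_le_one⟩ hFcont.continuousOn
  obtain ⟨R, hR1, hRb⟩ : ∃ R : ℝ, 1 ≤ R ∧ 1 + 2 * (F p₀ - F pm) / δ ≤ R :=
    ⟨max 1 (1 + 2 * (F p₀ - F pm) / δ), le_max_left _ _, le_max_right _ _⟩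
  have hcoerc : ∀ p : (Fin n → ℝ) × (Fin m → ℝ), F p ≤ F p₀ → ‖p - p₀‖ ≤ R := by
    intro p hFp
    clear_value F Q S p₀ z₀
    by_contra hgt
    push_neg at hgt
    set d : ℝ := ‖p - p₀‖ with hd
    have hd1 : 1 < d := lt_of_le_of_lt hR1 hgt
    have hd0 : 0 < d := by linarith
    set t : ℝ := 1 / d with ht
    have ht0 : 0 ≤ t := by positivity
    have ht1 : t ≤ 1 := by rw [ht, div_le_one hd0]; linarith
    have hq' := hSC p p₀ t ht0 ht1
    set q' := t • p + (1 - t) • p₀ with hq'def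
    have hq'ball : q' ∈ Metric.closedBall p₀ 1 := by
      rw [Metric.mem_closedBall, dist_eq_norm]
      have e : q' - p₀ = t • (p - p₀) := by rw [hq'def]; module
      rw [e, norm_smul, Real.norm_eq_abs, abs_of_nonneg ht0, ← hd, ht]
      rw [one_div, inv_mul_cancel₀ hd0.ne']
    have hlow : F pm ≤ F q' := isMinOn_iff.mp hpmmin q' hq'ball
    have hQd : d ^ 2 ≤ Q (p - p₀) := hQnorm _
    have htt : 0 ≤ t * (1 - t) := mul_nonneg ht0 (by linarith)
    have h3 : t * (1 - t) * d ^ 2 = d - 1 := by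
      have hdt : t * d = 1 := by rw [ht]; field_simp
      have e3 : t * (1 - t) * d ^ 2 = (t * d) * d - (t * d) * (t * d) := by ring
      rw [e3, hdt]; ring
    clear_value t d q'
    have hup : F q' ≤ F p₀ - δ / 2 * (d - 1) := by
      have h2 : δ / 2 * (t * (1 - t)) * d ^ 2 ≤ δ / 2 * (t * (1 - t)) * Q (p - p₀) := by
        apply mul_le_mul_of_nonneg_left hQd
        positivity
      have h1 : t * F p + (1 - t) * F p₀ ≤ F p₀ := by nlinarith
      have h4 : δ / 2 * (t * (1 - t)) * d ^ 2 = δ / 2 * (d - 1) := by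
        rw [mul_assoc, h3]
      nlinarith [hq']
    have hd2 : d ≤ 1 + 2 * (F p₀ - F pm) / δ := by
      have h6 := hlow.trans hup
      have h7 : d - 1 ≤ 2 * (F p₀ - F pm) / δ := by
        rw [le_div_iff₀ hδ]
        linarith
      linarith
    exact absurd (hd2.trans hRb) (not_le.mpr hgt)
  have hRpos : (0 : ℝ) ≤ R := le_trans zero_le_one hR1
  have hKcomp : IsCompact (S ∩ Metric.closedBall p₀ R) :=
    (isCompact_closedBall p₀ R).inter_left hSclosed
  have hKne : (S ∩ Metric.closedBall p₀ R).Nonempty :=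
    ⟨p₀, hp₀S, Metric.mem_closedBall_self hRpos⟩
  obtain ⟨ps, hpsK, hpsmin⟩ := hKcomp.exists_isMinOn hKne hFcont.continuousOn
  have hglobal : ∀ q ∈ S, F ps ≤ F q := by
    intro q hq
    by_cases hcase : F q ≤ F p₀
    · exact isMinOn_iff.mp hpsmin q ⟨hq, by
        rw [Metric.mem_closedBall, dist_eq_norm]; exact hcoerc q hcase⟩
    · exact le_trans (isMinOn_iff.mp hpsmin p₀ ⟨hp₀S, Metric.mem_closedBall_self hRpos⟩)
        (le_of_not_ge hcase)
  refine ⟨ps, ⟨hpsK.1, fun z w hzw => hglobal (z, w) hzw⟩, ?_⟩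
  rintro p ⟨hpS, hpmin⟩
  have h1 : F p ≤ F ps := hpmin ps.1 ps.2 hpsK.1
  have h2 : F ps ≤ F p := hglobal p hpS
  have heq : F p = F ps := le_antisymm h1 h2
  have hmidS : ((1/2 : ℝ) • p + (1 - (1/2 : ℝ)) • ps) ∈ S := hcomb p hpS ps hpsK.1 (1/2)
  have hSCmid := hSC p ps (1/2) (by norm_num) (by norm_num)
  have hge : F ps ≤ F ((1/2 : ℝ) • p + (1 - (1/2 : ℝ)) • ps) := hglobal _ hmidS
  have hQle : Q (p - ps) ≤ 0 := by
    clear_value F Q S p₀ z₀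
    nlinarith [hSCmid, hge, heq, hδ]
  have hzero : p - ps = 0 := hQeq0 _ hQle
  exact sub_eq_zero.mp hzero

end Turnpike
end

section
/- Let A ∈ ℝ^{n×n}, B ∈ ℝ^{n×m}, b ∈ ℝⁿ, fix a Kalman controllable decomposition of (A,B) with blocks A₁₁, A₁₂, A₂₂, B₁ and matrices P₁, P₂, assume (A1): there exists c ∈ ℝ^{n−k} with A₂₂ c = P₂ᵀ b, and let f satisfy (A2): f ∈ C²(ℝⁿ×ℝᵐ) with ∇²f ⪰ δ I_{n+m} everywhere for some δ > 0. Let x ∈ 𝒳. Then (x*,u*) is the solution of Problem (O) corresponding to x if and only if there exist λ₁* ∈ ℝⁿ and λ₂* ∈ ℝ^{n−k} such that f_x(x*,u*) + Aᵀ λ₁* + P₂ λ₂* = 0, f_u(x*,u*) + Bᵀ λ₁* = 0, A x* + B u* + b = 0, and P₂ᵀ x* + c = Q₂(P₂ᵀ x + c). -/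
open MeasureTheory Matrix Filter

namespace Turnpike

section AuxiliaryLemmas

private lemma hasDerivAt_line {E : Type*} [NormedAddCommGroup E] [NormedSpace ℝ E]
    {F : E → ℝ} (hF : Differentiable ℝ F) (p v : E) (t : ℝ) :
    HasDerivAt (fun s : ℝ => F (p + s • v)) (fderiv ℝ F (p + t • v) v) t := by
  have h1 : HasDerivAt (fun s : ℝ => p + s • v) v t := by
    simpa using ((hasDerivAt_id t).smul_const v).const_add p
  exact (hF (p + t • v)).hasFDerivAt.comp_hasDerivAt t h1

private lemma hasDerivAt_line₂ {E : Type*} [NormedAddCommGroup E] [NormedSpace ℝ E]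
    {F : E → ℝ} (hF : ContDiff ℝ 2 F) (p v w : E) (t : ℝ) :
    HasDerivAt (fun s : ℝ => fderiv ℝ F (p + s • v) w)
      (fderiv ℝ (fderiv ℝ F) (p + t • v) v w) t := by
  have hdF : Differentiable ℝ (fderiv ℝ F) :=
    (hF.fderiv_right (le_of_eq one_add_one_eq_two)).differentiable one_ne_zero
  have h1 : HasDerivAt (fun s : ℝ => p + s • v) v t := by
    simpa using ((hasDerivAt_id t).smul_const v).const_add p
  have h2 := (hdF (p + t • v)).hasFDerivAt.comp_hasDerivAt t h1
  exact (ContinuousLinearMap.apply ℝ ℝ w).hasFDerivAt.comp_hasDerivAt t h2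

private lemma taylor_lower {E : Type*} [NormedAddCommGroup E] [NormedSpace ℝ E]
    {F : E → ℝ} (hF : ContDiff ℝ 2 F)
    (hH : ∀ q v' : E, 0 ≤ fderiv ℝ (fderiv ℝ F) q v' v') (p v : E) :
    F p + fderiv ℝ F p v ≤ F (p + v) := by
  have hdF : Differentiable ℝ F := hF.differentiable two_ne_zero
  set φ : ℝ → ℝ := fun s : ℝ => F (p + s • v) with hφdef
  set ψ : ℝ → ℝ := fun s : ℝ => fderiv ℝ F (p + s • v) v with hψdef
  have hφ : ∀ t : ℝ, HasDerivAt φ (ψ t) t := fun t => hasDerivAt_line hdF p v t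
  have hψ : ∀ t : ℝ, HasDerivAt ψ (fderiv ℝ (fderiv ℝ F) (p + t • v) v v) t :=
    fun t => hasDerivAt_line₂ hF p v v t
  have hmono : Monotone ψ := by
    apply monotone_of_deriv_nonneg (fun t => (hψ t).differentiableAt)
    intro t; rw [(hψ t).deriv]; exact hH _ v
  obtain ⟨ξ, hξ, heq⟩ := exists_hasDerivAt_eq_slope φ ψ one_pos
    (fun t _ => (hφ t).continuousAt.continuousWithinAt) (fun t _ => hφ t)
  have h0 : ψ 0 ≤ ψ ξ := hmono hξ.1.le
  have hφ1 : φ 1 = F (p + v) := by simp [hφdef]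
  have hφ0 : φ 0 = F p := by simp [hφdef]
  have hψ0 : ψ 0 = fderiv ℝ F p v := by simp [hψdef]
  rw [heq, hφ1, hφ0, hψ0] at h0
  linarith [h0]

/-- The linear splitting map from `Fin n ⊕ Fin m → ℝ` to the product. -/
private def Jmap (n m : ℕ) : (Fin n ⊕ Fin m → ℝ) →ₗ[ℝ] (Fin n → ℝ) × (Fin m → ℝ) where
  toFun y := (y ∘ Sum.inl, y ∘ Sum.inr)
  map_add' _ _ := rfl
  map_smul' _ _ := rfl

private lemma gradX_eq {n m : ℕ} {f : (Fin n → ℝ) → (Fin m → ℝ) → ℝ}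
    (hF : Differentiable ℝ (fun p : (Fin n → ℝ) × (Fin m → ℝ) => f p.1 p.2))
    (x : Fin n → ℝ) (u : Fin m → ℝ) (i : Fin n) :
    gradX f x u i = fderiv ℝ (fun p : (Fin n → ℝ) × (Fin m → ℝ) => f p.1 p.2) (x, u)
      ((Pi.single i 1 : Fin n → ℝ), (0 : Fin m → ℝ)) := by
  have h : (fun s : ℝ => f (x + s • (Pi.single i 1 : Fin n → ℝ)) u)
      = fun s : ℝ => (fun p : (Fin n → ℝ) × (Fin m → ℝ) => f p.1 p.2)
          ((x, u) + s • ((Pi.single i 1 : Fin n → ℝ), (0 : Fin m → ℝ))) := by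
    funext s
    simp [Prod.smul_mk]
  have hd := (hasDerivAt_line hF (x, u)
    ((Pi.single i 1 : Fin n → ℝ), (0 : Fin m → ℝ)) 0).deriv
  simp only [zero_smul, add_zero] at hd
  rw [show gradX f x u i
    = deriv (fun s : ℝ => f (x + s • (Pi.single i 1 : Fin n → ℝ)) u) 0 from rfl, h, hd]

private lemma gradU_eq {n m : ℕ} {f : (Fin n → ℝ) → (Fin m → ℝ) → ℝ}
    (hF : Differentiable ℝ (fun p : (Fin n → ℝ) × (Fin m → ℝ) => f p.1 p.2))
    (x : Fin n → ℝ) (u : Fin m → ℝ) (j : Fin m) :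
    gradU f x u j = fderiv ℝ (fun p : (Fin n → ℝ) × (Fin m → ℝ) => f p.1 p.2) (x, u)
      ((0 : Fin n → ℝ), (Pi.single j 1 : Fin m → ℝ)) := by
  have h : (fun s : ℝ => f x (u + s • (Pi.single j 1 : Fin m → ℝ)))
      = fun s : ℝ => (fun p : (Fin n → ℝ) × (Fin m → ℝ) => f p.1 p.2)
          ((x, u) + s • ((0 : Fin n → ℝ), (Pi.single j 1 : Fin m → ℝ))) := by
    funext s
    simp [Prod.smul_mk]
  have hd := (hasDerivAt_line hF (x, u)
    ((0 : Fin n → ℝ), (Pi.single j 1 : Fin m → ℝ)) 0).deriv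
  simp only [zero_smul, add_zero] at hd
  rw [show gradU f x u j
    = deriv (fun s : ℝ => f x (u + s • (Pi.single j 1 : Fin m → ℝ))) 0 from rfl, h, hd]

private lemma hessMat_eq {n m : ℕ} {f : (Fin n → ℝ) → (Fin m → ℝ) → ℝ}
    (hF : ContDiff ℝ 2 (fun p : (Fin n → ℝ) × (Fin m → ℝ) => f p.1 p.2))
    (x : Fin n → ℝ) (u : Fin m → ℝ) (i j : Fin n ⊕ Fin m) :
    hessMat f x u i j = fderiv ℝ (fderiv ℝ (fun p : (Fin n → ℝ) × (Fin m → ℝ) => f p.1 p.2)) (x, u)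
      (Jmap n m (Pi.single i 1)) (Jmap n m (Pi.single j 1)) := by
  set F : (Fin n → ℝ) × (Fin m → ℝ) → ℝ := fun p => f p.1 p.2 with hFdef
  have hdF : Differentiable ℝ F := hF.differentiable two_ne_zero
  set vi := Jmap n m (Pi.single i 1 : Fin n ⊕ Fin m → ℝ) with hvi
  set vj := Jmap n m (Pi.single j 1 : Fin n ⊕ Fin m → ℝ) with hvj
  have hinner : ∀ s : ℝ, deriv (fun r : ℝ =>
      f (fun a => (Sum.elim x u + s • (Pi.single i 1 : Fin n ⊕ Fin m → ℝ) + r • (Pi.single j 1 : Fin n ⊕ Fin m → ℝ)) (Sum.inl a))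
        (fun a => (Sum.elim x u + s • (Pi.single i 1 : Fin n ⊕ Fin m → ℝ) + r • (Pi.single j 1 : Fin n ⊕ Fin m → ℝ)) (Sum.inr a))) 0
      = fderiv ℝ F ((x, u) + s • vi) vj := by
    intro s
    have heqf : (fun r : ℝ =>
      f (fun a => (Sum.elim x u + s • (Pi.single i 1 : Fin n ⊕ Fin m → ℝ) + r • (Pi.single j 1 : Fin n ⊕ Fin m → ℝ)) (Sum.inl a))
        (fun a => (Sum.elim x u + s • (Pi.single i 1 : Fin n ⊕ Fin m → ℝ) + r • (Pi.single j 1 : Fin n ⊕ Fin m → ℝ)) (Sum.inr a)))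
      = fun r : ℝ => F (((x, u) + s • vi) + r • vj) := rfl
    rw [heqf]
    have hd := (hasDerivAt_line hdF ((x, u) + s • vi) vj 0).deriv
    simpa only [zero_smul, add_zero] using hd
  have : hessMat f x u i j = deriv (fun s : ℝ => fderiv ℝ F ((x, u) + s • vi) vj) 0 := by
    rw [show hessMat f x u i j = deriv (fun s : ℝ => deriv (fun r : ℝ =>
      f (fun a => (Sum.elim x u + s • (Pi.single i 1 : Fin n ⊕ Fin m → ℝ) + r • (Pi.single j 1 : Fin n ⊕ Fin m → ℝ)) (Sum.inl a))
        (fun a => (Sum.elim x u + s • (Pi.single i 1 : Fin n ⊕ Fin m → ℝ) + r • (Pi.single j 1 : Fin n ⊕ Fin m → ℝ)) (Sum.inr a))) 0) 0 from rfl]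
    congr 1
    funext s
    exact hinner s
  rw [this]
  have hd2 := (hasDerivAt_line₂ hF (x, u) vi vj 0).deriv
  simpa only [zero_smul, add_zero] using hd2

private lemma pi_decomp {ι : Type*} [Fintype ι] [DecidableEq ι] (d : ι → ℝ) :
    d = ∑ a, d a • (Pi.single a 1 : ι → ℝ) := by
  funext t
  simp [Finset.sum_apply, Pi.single_apply]

private lemma fderiv_expand {n m : ℕ} {f : (Fin n → ℝ) → (Fin m → ℝ) → ℝ}
    (hF : Differentiable ℝ (fun p : (Fin n → ℝ) × (Fin m → ℝ) => f p.1 p.2))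
    (x : Fin n → ℝ) (u : Fin m → ℝ) (d : Fin n → ℝ) (e : Fin m → ℝ) :
    fderiv ℝ (fun p : (Fin n → ℝ) × (Fin m → ℝ) => f p.1 p.2) (x, u) (d, e)
      = gradX f x u ⬝ᵥ d + gradU f x u ⬝ᵥ e := by
  classical
  set F : (Fin n → ℝ) × (Fin m → ℝ) → ℝ := fun p => f p.1 p.2 with hFdef
  set L := fderiv ℝ F (x, u) with hL
  have hsplit : ((d, e) : (Fin n → ℝ) × (Fin m → ℝ))
      = (∑ a, d a • ((Pi.single a 1 : Fin n → ℝ), (0 : Fin m → ℝ)))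
        + (∑ c, e c • ((0 : Fin n → ℝ), (Pi.single c 1 : Fin m → ℝ))) := by
    have h1 := pi_decomp d
    have h2 := pi_decomp e
    ext t
    · simp [Prod.fst_sum, ← h1]
    · simp [Prod.snd_sum, ← h2]
  rw [hsplit, map_add, map_sum, map_sum]
  simp only [_root_.map_smul, smul_eq_mul]
  rw [show (∑ a, d a * L ((Pi.single a 1 : Fin n → ℝ), (0 : Fin m → ℝ)))
      = ∑ a, gradX f x u a * d a from Finset.sum_congr rfl fun a _ => by
        rw [← gradX_eq hF x u a]; ring,
    show (∑ c, e c * L ((0 : Fin n → ℝ), (Pi.single c 1 : Fin m → ℝ)))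
      = ∑ c, gradU f x u c * e c from Finset.sum_congr rfl fun c _ => by
        rw [← gradU_eq hF x u c]; ring]
  rfl

private lemma hess_quadform {n m : ℕ} {f : (Fin n → ℝ) → (Fin m → ℝ) → ℝ}
    (hF : ContDiff ℝ 2 (fun p : (Fin n → ℝ) × (Fin m → ℝ) => f p.1 p.2))
    (x : Fin n → ℝ) (u : Fin m → ℝ) (y : Fin n ⊕ Fin m → ℝ) :
    fderiv ℝ (fderiv ℝ (fun p : (Fin n → ℝ) × (Fin m → ℝ) => f p.1 p.2)) (x, u)
      (Jmap n m y) (Jmap n m y) = y ⬝ᵥ (hessMat f x u).mulVec y := by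
  classical
  have hy : y = ∑ i, y i • (Pi.single i 1 : Fin n ⊕ Fin m → ℝ) := pi_decomp y
  conv_lhs => rw [hy]
  simp only [_root_.map_sum, _root_.map_smul, ContinuousLinearMap.coe_sum',
    Finset.sum_apply, ContinuousLinearMap.smul_apply, smul_eq_mul]
  simp only [← hessMat_eq hF x u]
  rw [dotProduct]
  simp only [Matrix.mulVec, dotProduct, Finset.mul_sum]
  rw [Finset.sum_comm]
  exact Finset.sum_congr rfl fun i _ => Finset.sum_congr rfl fun j _ => by ring

private lemma hess_nonneg {n m : ℕ} {f : (Fin n → ℝ) → (Fin m → ℝ) → ℝ} {δ : ℝ}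
    (hδ : 0 < δ) (hA2 : A2Hyp f δ) :
    ∀ (q v : (Fin n → ℝ) × (Fin m → ℝ)),
      0 ≤ fderiv ℝ (fderiv ℝ (fun p : (Fin n → ℝ) × (Fin m → ℝ) => f p.1 p.2)) q v v := by
  rintro ⟨x, u⟩ ⟨d, e⟩
  have hv : ((d, e) : (Fin n → ℝ) × (Fin m → ℝ)) = Jmap n m (Sum.elim d e) := rfl
  rw [hv, hess_quadform hA2.1 x u (Sum.elim d e)]
  set y := Sum.elim d e with hy
  have hpsd := (hA2.2 x u).dotProduct_mulVec_nonneg y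
  have hexp : star y ⬝ᵥ ((hessMat f x u - δ • 1).mulVec y)
      = y ⬝ᵥ (hessMat f x u).mulVec y - δ * (y ⬝ᵥ y) := by
    rw [star_trivial, Matrix.sub_mulVec, dotProduct_sub, Matrix.smul_mulVec,
      Matrix.one_mulVec, dotProduct_smul, smul_eq_mul]
  rw [hexp] at hpsd
  have hyy : 0 ≤ y ⬝ᵥ y := Finset.sum_nonneg fun i _ => mul_self_nonneg _
  nlinarith

private lemma rowspace {ι κ : Type*} [Fintype ι] [Fintype κ] [DecidableEq ι] [DecidableEq κ]
    (M : Matrix ι κ ℝ) (g : κ → ℝ) (h : ∀ d : κ → ℝ, M.mulVec d = 0 → g ⬝ᵥ d = 0) :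
    ∃ y : ι → ℝ, g = Mᵀ.mulVec y := by
  classical
  set S : Submodule ℝ (EuclideanSpace ℝ κ) := LinearMap.range (Matrix.toEuclideanLin Mᵀ) with hS
  obtain ⟨s, hs, t, ht, hg⟩ :=
    S.exists_add_mem_mem_orthogonal ((WithLp.equiv 2 (κ → ℝ)).symm g)
  have hinner : ∀ z w : EuclideanSpace ℝ κ,
      (inner ℝ z w : ℝ) = (WithLp.equiv 2 (κ → ℝ)) z ⬝ᵥ (WithLp.equiv 2 (κ → ℝ)) w := by
    intro z w
    rw [PiLp.inner_apply]
    simp [dotProduct, RCLike.inner_apply, mul_comm]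
  set tt := (WithLp.equiv 2 (κ → ℝ)) t with htt
  have hMt : M.mulVec tt = 0 := by
    funext i0
    have hmem : Matrix.toEuclideanLin Mᵀ ((WithLp.equiv 2 (ι → ℝ)).symm (Pi.single i0 1)) ∈ S :=
      ⟨_, rfl⟩
    have h0 : (inner ℝ (Matrix.toEuclideanLin Mᵀ ((WithLp.equiv 2 (ι → ℝ)).symm (Pi.single i0 1))) t : ℝ) = 0 :=
      (Submodule.mem_orthogonal S t).mp ht _ hmem
    rw [Matrix.toEuclideanLin_apply, hinner] at h0
    simp only [WithLp.equiv_apply, WithLp.equiv_symm_apply, WithLp.ofLp_toLp] at h0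
    rw [Matrix.mulVec_single_one, Matrix.col_transpose] at h0
    exact h0
  have hgt : g ⬝ᵥ tt = 0 := h tt hMt
  have htzero : t = 0 := by
    have h1 : (inner ℝ ((WithLp.equiv 2 (κ → ℝ)).symm g) t : ℝ) = g ⬝ᵥ tt := by
      rw [hinner]; simp [htt]
    have h2 : (inner ℝ ((WithLp.equiv 2 (κ → ℝ)).symm g) t : ℝ)
        = (inner ℝ s t : ℝ) + (inner ℝ t t : ℝ) := by
      rw [hg, inner_add_left]
    have h3 : (inner ℝ s t : ℝ) = 0 := (Submodule.mem_orthogonal S t).mp ht s hs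
    have h4 : (inner ℝ t t : ℝ) = 0 := by rw [h1, hgt] at h2; linarith [h2, h3]
    exact inner_self_eq_zero.mp h4
  obtain ⟨y, hy⟩ := hs
  refine ⟨(WithLp.equiv 2 (ι → ℝ)) y, ?_⟩
  have : (WithLp.equiv 2 (κ → ℝ)).symm g = s := by rw [hg, htzero, add_zero]
  rw [← this] at hy
  rw [Matrix.toEuclideanLin_apply] at hy
  have := congrArg (WithLp.equiv 2 (κ → ℝ)) hy
  simpa using this.symm

private lemma multiplier_exists {n m l : ℕ} (A : Matrix (Fin n) (Fin n) ℝ)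
    (B : Matrix (Fin n) (Fin m) ℝ) (P₂ : Matrix (Fin n) (Fin l) ℝ)
    (gx : Fin n → ℝ) (gu : Fin m → ℝ)
    (h : ∀ (d : Fin n → ℝ) (e : Fin m → ℝ), A.mulVec d + B.mulVec e = 0 →
      P₂ᵀ.mulVec d = 0 → gx ⬝ᵥ d + gu ⬝ᵥ e = 0) :
    ∃ (l₁ : Fin n → ℝ) (l₂ : Fin l → ℝ),
      gx + Aᵀ.mulVec l₁ + P₂.mulVec l₂ = 0 ∧ gu + Bᵀ.mulVec l₁ = 0 := by
  classical
  set M : Matrix (Fin n ⊕ Fin l) (Fin n ⊕ Fin m) ℝ := Matrix.fromBlocks A B P₂ᵀ 0 with hM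
  obtain ⟨y, hy⟩ := rowspace M (Sum.elim gx gu) (by
    intro d' hd'
    have hd'e : d' = Sum.elim (d' ∘ Sum.inl) (d' ∘ Sum.inr) := by
      funext a; cases a <;> rfl
    rw [hM, Matrix.fromBlocks_mulVec] at hd'
    have h1 : A.mulVec (d' ∘ Sum.inl) + B.mulVec (d' ∘ Sum.inr) = 0 := by
      funext a; exact congrFun hd' (Sum.inl a)
    have h2 : P₂ᵀ.mulVec (d' ∘ Sum.inl) + (0 : Matrix (Fin l) (Fin m) ℝ).mulVec (d' ∘ Sum.inr) = 0 := by
      funext a; exact congrFun hd' (Sum.inr a)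
    rw [Matrix.zero_mulVec, add_zero] at h2
    calc Sum.elim gx gu ⬝ᵥ d' = Sum.elim gx gu ⬝ᵥ Sum.elim (d' ∘ Sum.inl) (d' ∘ Sum.inr) := by
          rw [← hd'e]
      _ = gx ⬝ᵥ (d' ∘ Sum.inl) + gu ⬝ᵥ (d' ∘ Sum.inr) := sumElim_dotProduct_sumElim _ _ _ _
      _ = 0 := h _ _ h1 h2)
  rw [hM, Matrix.fromBlocks_transpose, Matrix.transpose_transpose, Matrix.transpose_zero,
    Matrix.fromBlocks_mulVec] at hy
  refine ⟨-(y ∘ Sum.inl), -(y ∘ Sum.inr), ?_, ?_⟩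
  · have h1 : gx = Aᵀ.mulVec (y ∘ Sum.inl) + P₂.mulVec (y ∘ Sum.inr) := by
      funext a; exact congrFun hy (Sum.inl a)
    rw [h1, Matrix.mulVec_neg, Matrix.mulVec_neg]
    abel
  · have h2 : gu = Bᵀ.mulVec (y ∘ Sum.inl) + (0 : Matrix (Fin m) (Fin l) ℝ).mulVec (y ∘ Sum.inr) := by
      funext a; exact congrFun hy (Sum.inr a)
    rw [Matrix.zero_mulVec, add_zero] at h2
    rw [h2, Matrix.mulVec_neg]
    abel

private lemma G1_inter_kernel {l : ℕ} (A22 : Matrix (Fin l) (Fin l) ℝ) (y : Fin l → ℝ)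
    (h1 : y ∈ G1 A22) (h2 : A22.mulVec y = 0) : y = 0 := by
  classical
  rcases Nat.eq_zero_or_pos l with hl | hl
  · subst hl; funext i; exact absurd i.2 (by omega)
  set T : Module.End ℂ (Fin l → ℂ) := Matrix.toLinAlgEquiv' (A22.map Complex.ofReal) with hT
  set yc : Fin l → ℂ := fun i => (y i : ℂ) with hyc
  have hpow : ∀ (μ : ℂ) (w : Fin l → ℂ),
      ((T - μ • 1) ^ l) w = ((A22.map Complex.ofReal - μ • 1) ^ l).mulVec w := by
    intro μ w
    have : (T - μ • 1) ^ l = Matrix.toLinAlgEquiv' ((A22.map Complex.ofReal - μ • 1) ^ l) := by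
      rw [map_pow, map_sub, _root_.map_smul, _root_.map_one]
    rw [this]
    rfl
  have hspan : (Submodule.span ℂ
      {w : Fin l → ℂ | ∃ μ : ℂ, μ.re < 0 ∧
        ((A22.map (Complex.ofReal) - μ • 1) ^ l).mulVec w = 0})
      ≤ ⨆ μ : ℂ, ⨆ _ : μ ≠ 0, T.genEigenspace μ (l : ℕ∞) := by
    rw [Submodule.span_le]
    rintro w ⟨μ, hμ, hw⟩
    have hμ0 : μ ≠ 0 := fun h => by simp [h] at hμ
    have hmem : w ∈ T.genEigenspace μ (l : ℕ∞) := by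
      rw [Module.End.mem_genEigenspace]
      exact ⟨l, le_rfl, by rw [LinearMap.mem_ker, hpow]; exact hw⟩
    exact Submodule.mem_iSup_of_mem μ (Submodule.mem_iSup_of_mem hμ0 hmem)
  have hy1 : yc ∈ ⨆ μ : ℂ, ⨆ _ : μ ≠ 0, T.genEigenspace μ (l : ℕ∞) := hspan h1
  have hTyc : T yc = 0 := by
    have hTapp : T yc = (A22.map Complex.ofReal).mulVec yc := rfl
    rw [hTapp]
    funext i
    have hcf := congrFun h2 i
    simp only [Matrix.mulVec, dotProduct, Matrix.map_apply, hyc] at hcf ⊢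
    rw [show ∑ j, (A22 i j : ℂ) * (y j : ℂ) = ((∑ j, A22 i j * y j : ℝ) : ℂ) by push_cast; ring]
    rw [hcf]
    simp
  have hy0 : yc ∈ T.genEigenspace 0 (l : ℕ∞) := by
    rw [Module.End.mem_genEigenspace]
    refine ⟨l, le_rfl, ?_⟩
    have hyk : yc ∈ LinearMap.ker (T ^ l) :=
      T.iterateKer.monotone hl (by
        simpa [LinearMap.mem_ker, pow_one] using hTyc)
    have heq : (T - (0:ℂ) • 1) = T := by simp
    rw [heq]
    exact hyk
  have hind := Module.End.independent_genEigenspace T (l : ℕ∞)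
  have hdisj := hind 0
  have hyczero : yc = 0 := Submodule.disjoint_def.mp hdisj yc hy0 hy1
  funext i
  have hi := congrFun hyczero i
  simp only [hyc, Pi.zero_apply] at hi ⊢
  exact_mod_cast hi

private lemma isQ2_unique {l : ℕ} {A22 : Matrix (Fin l) (Fin l) ℝ} {w y y' : Fin l → ℝ}
    (h : IsQ2 A22 w y) (h' : IsQ2 A22 w y') : y = y' := by
  have hker : A22.mulVec (y - y') = 0 := by
    have hy := h.1
    have hy' := h'.1
    simp only [G2, Set.mem_setOf_eq] at hy hy'
    rw [Matrix.mulVec_sub, hy, hy', sub_self]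
  have hG1 : (y - y') ∈ G1 A22 := by
    have h2' : (fun i => (((w - y') i : ℝ) : ℂ)) ∈ Submodule.span ℂ
        {w' : Fin l → ℂ | ∃ μ : ℂ, μ.re < 0 ∧
          ((A22.map (Complex.ofReal) - μ • 1) ^ l).mulVec w' = 0} := h'.2
    have h2 : (fun i => (((w - y) i : ℝ) : ℂ)) ∈ Submodule.span ℂ
        {w' : Fin l → ℂ | ∃ μ : ℂ, μ.re < 0 ∧
          ((A22.map (Complex.ofReal) - μ • 1) ^ l).mulVec w' = 0} := h.2
    show (fun i => (((y - y') i : ℝ) : ℂ)) ∈ Submodule.span ℂ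
        {w' : Fin l → ℂ | ∃ μ : ℂ, μ.re < 0 ∧
          ((A22.map (Complex.ofReal) - μ • 1) ^ l).mulVec w' = 0}
    have e : (fun i => (((y - y') i : ℝ) : ℂ))
        = (fun i => (((w - y') i : ℝ) : ℂ)) - (fun i => (((w - y) i : ℝ) : ℂ)) := by
      funext i
      simp only [Pi.sub_apply]
      push_cast
      ring
    rw [e]
    exact Submodule.sub_mem _ h2' h2
  have := G1_inter_kernel A22 (y - y') hG1 hker
  exact sub_eq_zero.mp this

end AuxiliaryLemmas

/-- Lagrange multiplier characterization of the solution of Problem (O)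
(Theorem 5.2, equation (5.3)). -/
theorem static_problem_multiplier_characterization {n k l m : ℕ}
    (A : Matrix (Fin n) (Fin n) ℝ) (B : Matrix (Fin n) (Fin m) ℝ)
    (P₁ : Matrix (Fin n) (Fin k) ℝ) (P₂ : Matrix (Fin n) (Fin l) ℝ)
    (hK : KalmanDec n k l m A B P₁ P₂)
    (b : Fin n → ℝ) (c : Fin l → ℝ) (hc : (P₂ᵀ * A * P₂).mulVec c = P₂ᵀ.mulVec b)
    (f : (Fin n → ℝ) → (Fin m → ℝ) → ℝ) (δ : ℝ) (hδ : 0 < δ) (hA2 : A2Hyp f δ)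
    (x : Fin n → ℝ) (hx : Feas (P₂ᵀ * A * P₂) (P₂ᵀ.mulVec x + c))
    (xs : Fin n → ℝ) (us : Fin m → ℝ) :
    (InV A B b P₂ c x xs us ∧
        ∀ (z : Fin n → ℝ) (w : Fin m → ℝ), InV A B b P₂ c x z w → f xs us ≤ f z w) ↔
      ∃ (l₁ : Fin n → ℝ) (l₂ : Fin l → ℝ),
        gradX f xs us + Aᵀ.mulVec l₁ + P₂.mulVec l₂ = 0 ∧
        gradU f xs us + Bᵀ.mulVec l₁ = 0 ∧
        A.mulVec xs + B.mulVec us + b = 0 ∧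
        IsQ2 (P₂ᵀ * A * P₂) (P₂ᵀ.mulVec x + c) (P₂ᵀ.mulVec xs + c) := by
  have hF : ContDiff ℝ 2 (fun p : (Fin n → ℝ) × (Fin m → ℝ) => f p.1 p.2) := hA2.1
  have hdF : Differentiable ℝ (fun p : (Fin n → ℝ) × (Fin m → ℝ) => f p.1 p.2) :=
    hF.differentiable two_ne_zero
  have hHn := hess_nonneg hδ hA2
  constructor
  · rintro ⟨⟨haff, hq2⟩, hmin⟩
    have hkey : ∀ (d : Fin n → ℝ) (e : Fin m → ℝ), A.mulVec d + B.mulVec e = 0 →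
        P₂ᵀ.mulVec d = 0 → gradX f xs us ⬝ᵥ d + gradU f xs us ⬝ᵥ e = 0 := by
      intro d e hde hPd
      have hfeas : ∀ t : ℝ, InV A B b P₂ c x (xs + t • d) (us + t • e) := by
        intro t
        constructor
        · have hrw : A.mulVec (xs + t • d) + B.mulVec (us + t • e) + b
              = (A.mulVec xs + B.mulVec us + b) + t • (A.mulVec d + B.mulVec e) := by
            rw [Matrix.mulVec_add, Matrix.mulVec_add, Matrix.mulVec_smul, Matrix.mulVec_smul]
            module
          rw [hrw, hde, smul_zero, add_zero, haff]
        · have hrw : P₂ᵀ.mulVec (xs + t • d) + c = P₂ᵀ.mulVec xs + c := by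
            rw [Matrix.mulVec_add, Matrix.mulVec_smul, hPd, smul_zero, add_zero]
          rw [hrw]
          exact hq2
      set φ : ℝ → ℝ := fun s : ℝ => (fun p : (Fin n → ℝ) × (Fin m → ℝ) => f p.1 p.2)
        ((xs, us) + s • ((d, e) : (Fin n → ℝ) × (Fin m → ℝ))) with hφdef
      have h00 : φ 0 = f xs us := by simp [hφdef]
      have hlm : IsLocalMin φ 0 := by
        refine Filter.Eventually.of_forall fun t => ?_
        rw [h00]
        exact hmin _ _ (hfeas t)
      have hder := hlm.hasDerivAt_eq_zero
        (hasDerivAt_line hdF (xs, us) ((d, e) : (Fin n → ℝ) × (Fin m → ℝ)) 0)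
      simp only [zero_smul, add_zero] at hder
      rw [fderiv_expand hdF] at hder
      exact hder
    obtain ⟨l₁, l₂, hl1, hl2⟩ := multiplier_exists A B P₂ (gradX f xs us) (gradU f xs us) hkey
    exact ⟨l₁, l₂, hl1, hl2, haff, hq2⟩
  · rintro ⟨l₁, l₂, h1, h2, h3, h4⟩
    refine ⟨⟨h3, h4⟩, ?_⟩
    rintro z w ⟨hzw1, hzw2⟩
    have htay := taylor_lower hF hHn (xs, us) ((z - xs, w - us) : (Fin n → ℝ) × (Fin m → ℝ))
    have hpt : ((xs, us) : (Fin n → ℝ) × (Fin m → ℝ)) + (z - xs, w - us) = (z, w) := by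
      ext <;> simp
    rw [hpt, fderiv_expand hdF] at htay
    have hP2 : P₂ᵀ.mulVec (z - xs) = 0 := by
      have huq : P₂ᵀ.mulVec z + c = P₂ᵀ.mulVec xs + c := isQ2_unique hzw2 h4
      have h5 : P₂ᵀ.mulVec z = P₂ᵀ.mulVec xs := by
        have := congrArg (fun v => v - c) huq
        simpa using this
      rw [Matrix.mulVec_sub, h5, sub_self]
    have hAB : A.mulVec (z - xs) + B.mulVec (w - us) = 0 := by
      have h6 : A.mulVec z + B.mulVec w + b = A.mulVec xs + B.mulVec us + b :=
        hzw1.trans h3.symm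
      have h7 : A.mulVec (z - xs) + B.mulVec (w - us)
          = (A.mulVec z + B.mulVec w + b) - (A.mulVec xs + B.mulVec us + b) := by
        rw [Matrix.mulVec_sub, Matrix.mulVec_sub]
        module
      rw [h7, h6, sub_self]
    have hgx : gradX f xs us = -(Aᵀ.mulVec l₁ + P₂.mulVec l₂) := by
      rw [add_assoc] at h1
      exact eq_neg_of_add_eq_zero_left h1
    have hgu : gradU f xs us = -(Bᵀ.mulVec l₁) := eq_neg_of_add_eq_zero_left h2
    have e1 : Aᵀ.mulVec l₁ ⬝ᵥ (z - xs) = l₁ ⬝ᵥ A.mulVec (z - xs) := by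
      rw [Matrix.mulVec_transpose, ← Matrix.dotProduct_mulVec]
    have e2 : P₂.mulVec l₂ ⬝ᵥ (z - xs) = l₂ ⬝ᵥ P₂ᵀ.mulVec (z - xs) := by
      rw [show P₂ = P₂ᵀᵀ from (Matrix.transpose_transpose P₂).symm, Matrix.mulVec_transpose,
        ← Matrix.dotProduct_mulVec, Matrix.transpose_transpose]
    have e3 : Bᵀ.mulVec l₁ ⬝ᵥ (w - us) = l₁ ⬝ᵥ B.mulVec (w - us) := by
      rw [Matrix.mulVec_transpose, ← Matrix.dotProduct_mulVec]
    have hdot : gradX f xs us ⬝ᵥ (z - xs) + gradU f xs us ⬝ᵥ (w - us) = 0 := by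
      rw [hgx, hgu, neg_dotProduct, neg_dotProduct, add_dotProduct,
        e1, e2, e3]
      have hsum : l₁ ⬝ᵥ A.mulVec (z - xs) + l₁ ⬝ᵥ B.mulVec (w - us)
          = l₁ ⬝ᵥ (A.mulVec (z - xs) + B.mulVec (w - us)) := (dotProduct_add _ _ _).symm
      have : l₁ ⬝ᵥ (A.mulVec (z - xs) + B.mulVec (w - us)) = 0 := by
        rw [hAB, dotProduct_zero]
      have hz2 : l₂ ⬝ᵥ P₂ᵀ.mulVec (z - xs) = 0 := by
        rw [hP2, dotProduct_zero]
      rw [hz2]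
      linarith [hsum, this]
    rw [hdot] at htay
    simpa using htay


end Turnpike
end
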